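/- arXiv:2305.07451 — 2 statements merged into one kernel-verified Lean document; each statement's English description precedes it below -/
import Mathlib

section
/- An automaton with timers A is race-avoiding if and only if every padded timed run of A with races can be wiggled, and this holds if and only if for every padded timed run ρ of A the block graph G_ρ is acyclic. -/
set_option maxHeartbeats 1000000

namespace AwT

/-- Actions of an automaton with timers: reading an input, or processing the timeout of a timer. -/
inductive Act (I X : Type) where
  | input : I → Act I X
  | timeout : X → Act I X

/-- Updates: `some (x, c)` starts timer `x` with positive integer value `c`; `none` is `⊥`. -/
abbrev Upd (X : Type) := Option (X × ℕ+)

/-- An automaton with timers (AT). `X` is the (finite) set of timers, `I` the (finite) set of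
inputs, `Q` the (finite) set of states. -/
structure AT (X I Q : Type) [DecidableEq X] where
  q0 : Q
  χ : Q → Finset X
  δ : Q → Act I X → Option (Q × Upd X)
  init_active : χ q0 = ∅
  defined_iff : ∀ q a, (δ q a).isSome ↔
      (∃ i, a = Act.input i) ∨ (∃ x ∈ χ q, a = Act.timeout x)
  timeout_self : ∀ q x q' y c, δ q (Act.timeout x) = some (q', some (y, c)) → y = x
  noupdate_sub : ∀ q a q', δ q a = some (q', none) → χ q' ⊆ χ q
  noupdate_timeout : ∀ q x q', δ q (Act.timeout x) = some (q', none) → x ∉ χ q'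
  update_mem : ∀ q a q' x c, δ q a = some (q', some (x, c)) → x ∈ χ q'
  update_sub : ∀ q a q' x c, δ q a = some (q', some (x, c)) → χ q' \ {x} ⊆ χ q

variable {X I Q : Type} [DecidableEq X]

/-- A timed run `(q₀,κ₀) d₁ i₁/u₁ … dₙ iₙ/uₙ d_{n+1} (q,κ)` of an AT, with `n` discrete
transitions.  `states k` and `vals k` give the configuration before the `k`-th delay,
`delays k` is the `k`-th delay, and `acts k`/`upds k` are the `k`-th action and update. -/
structure TimedRun (A : AT X I Q) (n : ℕ) where
  states : Fin (n+1) → Q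
  vals : Fin (n+1) → X → ℝ
  delays : Fin (n+1) → ℝ
  acts : Fin n → Act I X
  upds : Fin n → Upd X
  init_state : states 0 = A.q0
  init_val : ∀ x, vals 0 x = 0
  delays_nonneg : ∀ k, 0 ≤ delays k
  delays_le : ∀ k, ∀ x ∈ A.χ (states k), delays k ≤ vals k x
  trans : ∀ k : Fin n, A.δ (states k.castSucc) (acts k) = some (states k.succ, upds k)
  timeout_zero : ∀ (k : Fin n) (x : X), acts k = Act.timeout x →
      vals k.castSucc x - delays k.castSucc = 0
  val_step : ∀ (k : Fin n) (y : X),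
      vals k.succ y = (upds k).elim (vals k.castSucc y - delays k.castSucc)
        (fun p => if y = p.1 then ((p.2 : ℕ) : ℝ) else vals k.castSucc y - delays k.castSucc)

variable {A : AT X I Q} {n : ℕ}

/-- A timed run is padded if its first and last delays are positive and no active timer has
value 0 in its last configuration. -/
def Padded (ρ : TimedRun A n) : Prop :=
  0 < ρ.delays 0 ∧ 0 < ρ.delays (Fin.last n) ∧
    ∀ x ∈ A.χ (ρ.states (Fin.last n)),
      ρ.vals (Fin.last n) x - ρ.delays (Fin.last n) ≠ 0

/-- Timer fates of blocks: `⊥`, `●` (discarded at value zero), `×`. -/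
inductive Fate where
  | bot | disc0 | cross
  deriving DecidableEq

/-- The transition at index `ℓ` discards the timer `x`: `x` is active before the transition,
the action is not `to[x]`, and the transition stops or restarts `x`. -/
def Discards (ρ : TimedRun A n) (ℓ : Fin n) (x : X) : Prop :=
  x ∈ A.χ (ρ.states ℓ.castSucc) ∧ ρ.acts ℓ ≠ Act.timeout x ∧
    (x ∉ A.χ (ρ.states ℓ.succ) ∨ ∃ c, ρ.upds ℓ = some (x, c))

/-- Action `k` triggers action `k'`. -/
def Triggers (ρ : TimedRun A n) (k k' : Fin n) : Prop :=
  k < k' ∧ ∃ x c, ρ.upds k = some (x, c) ∧ ρ.acts k' = Act.timeout x ∧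
    ∀ ℓ, k < ℓ → ℓ < k' → ρ.acts ℓ ≠ Act.timeout x ∧ ¬ Discards ρ ℓ x

/-- After action `k` (which restarts `x`), the first transition discarding `x` does so while the
value of `x` is zero. -/
def DiscardedAtZeroAfter (ρ : TimedRun A n) (k : Fin n) (x : X) : Prop :=
  ∃ ℓ, k < ℓ ∧ Discards ρ ℓ x ∧ (∀ m, k < m → m < ℓ → ¬ Discards ρ m x) ∧
    ρ.vals ℓ.castSucc x - ρ.delays ℓ.castSucc = 0

/-- `γ` is the timer fate of a block whose index sequence is `ks`. -/
def FateOf (ρ : TimedRun A n) (ks : List (Fin n)) (γ : Fate) : Prop :=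
  ∀ k, ks.getLast? = some k →
    ((ρ.upds k = none → γ = Fate.bot) ∧
     ∀ x c, ρ.upds k = some (x, c) →
        ((DiscardedAtZeroAfter ρ k x → γ = Fate.disc0) ∧
         (¬ DiscardedAtZeroAfter ρ k x → γ = Fate.cross)))

/-- `(ks, γ)` is a block of `ρ`: `ks` is a maximal chain of actions each triggering the next,
starting with an input-action, and `γ` is its timer fate. -/
def IsBlock (ρ : TimedRun A n) (ks : List (Fin n)) (γ : Fate) : Prop :=
  ks ≠ [] ∧ List.Chain' (Triggers ρ) ks ∧
    (∀ k, ks.head? = some k → ∃ i, ρ.acts k = Act.input i) ∧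
    (∀ k k', ks.getLast? = some k → ¬ Triggers ρ k k') ∧
    FateOf ρ ks γ

/-- The sum of the delays strictly between action `k` and action `k'` (for `k ≤ k'`). -/
def delayBetween (ρ : TimedRun A n) (k k' : Fin n) : ℝ :=
  ∑ ℓ ∈ Finset.Ioc k k', ρ.delays ℓ.castSucc

/-- `B ≺ B'`: blocks `B` and `B'` participate in a race, witnessed either by an action of `B`
occurring before an action of `B'` with total delay zero in between, or by an action of `B`
being the first to discard the timer (re)started by the last action of `B'` while it has
value zero. -/
def Prec (ρ : TimedRun A n) (B B' : List (Fin n) × Fate) : Prop :=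
  (∃ k ∈ B.1, ∃ k' ∈ B'.1, k < k' ∧ delayBetween ρ k k' = 0) ∨
  (B'.2 = Fate.disc0 ∧ ∃ k' x c, B'.1.getLast? = some k' ∧ ρ.upds k' = some (x, c) ∧
     ∃ ℓ ∈ B.1, k' < ℓ ∧ Discards ρ ℓ x ∧ ∀ m, k' < m → m < ℓ → ¬ Discards ρ m x)

/-- Two blocks participate in a (common) race. -/
def BlocksRace (ρ : TimedRun A n) (B B' : List (Fin n) × Fate) : Prop :=
  Prec ρ B B' ∨ Prec ρ B' B

/-- The run contains a race. -/
def HasRace (ρ : TimedRun A n) : Prop :=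
  ∃ B B' : List (Fin n) × Fate, IsBlock ρ B.1 B.2 ∧ IsBlock ρ B'.1 B'.2 ∧ B ≠ B' ∧
    BlocksRace ρ B B'

/-- The block graph of `ρ` (vertices: blocks, edges: `≺`) has a cycle. -/
def HasCycle (ρ : TimedRun A n) : Prop :=
  ∃ (m : ℕ) (f : Fin (m+1) → List (Fin n) × Fate),
    0 < m ∧ (∀ j, IsBlock ρ (f j).1 (f j).2) ∧ f (Fin.last m) = f 0 ∧
      ∀ j : Fin m, Prec ρ (f j.castSucc) (f j.succ)

open Classical in
/-- The delays of `ρ` after shifting the block whose set of action indices is `S` by `ε`: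
the delay preceding an action of the block whose predecessor is not in the block gains `ε`,
and the delay following an action of the block whose successor is not in the block loses `ε`. -/
noncomputable def wiggledDelay (ρ : TimedRun A n) (S : Set (Fin n)) (ε : ℝ)
    (j : Fin (n+1)) : ℝ :=
  ρ.delays j
    + (if (∃ k : Fin n, k.castSucc = j ∧ k ∈ S ∧ ∀ k' : Fin n, k'.succ = j → k' ∉ S)
        then ε else 0)
    - (if (∃ k : Fin n, k.succ = j ∧ k ∈ S ∧ ∀ k' : Fin n, k'.castSucc = j → k' ∉ S)
        then ε else 0)

/-- `ρ'` is obtained from `ρ` by shifting the actions with indices in `S` by `ε`. -/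
def WiggleSpec (ρ ρ' : TimedRun A n) (S : Set (Fin n)) (ε : ℝ) : Prop :=
  ρ'.states = ρ.states ∧ ρ'.acts = ρ.acts ∧ ρ'.upds = ρ.upds ∧
    ∀ j, ρ'.delays j = wiggledDelay ρ S ε j

/-- The untimed trace of a run: the alternating sequence of states and actions. -/
def untime (ρ : TimedRun A n) : List (Q × Act I X) × Q :=
  (List.ofFn (fun k : Fin n => (ρ.states k.castSucc, ρ.acts k)), ρ.states (Fin.last n))

/-- The block with index sequence `ks` can be wiggled: for some `ε ≠ 0`, shifting it by `ε`
yields a padded timed run (with the same untimed trace) in which it participates in no race. -/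
def CanWiggleBlock (ρ : TimedRun A n) (ks : List (Fin n)) : Prop :=
  ∃ ε : ℝ, ε ≠ 0 ∧ ∃ ρ' : TimedRun A n, WiggleSpec ρ ρ' {k | k ∈ ks} ε ∧ Padded ρ' ∧
    ∀ (γ₁ : Fate) (ks₂ : List (Fin n)) (γ₂ : Fate),
      IsBlock ρ' ks γ₁ → IsBlock ρ' ks₂ γ₂ → (ks, γ₁) ≠ (ks₂, γ₂) →
        ¬ BlocksRace ρ' (ks, γ₁) (ks₂, γ₂)

/-- One wiggling step: wiggle a single block of `ρ`. -/
def WiggleStep (ρ ρ' : TimedRun A n) : Prop :=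
  ∃ (ks : List (Fin n)) (γ : Fate) (ε : ℝ), ε ≠ 0 ∧ IsBlock ρ ks γ ∧
    WiggleSpec ρ ρ' {k | k ∈ ks} ε ∧ Padded ρ' ∧
    ∀ (γ₁ : Fate) (ks₂ : List (Fin n)) (γ₂ : Fate),
      IsBlock ρ' ks γ₁ → IsBlock ρ' ks₂ γ₂ → (ks, γ₁) ≠ (ks₂, γ₂) →
        ¬ BlocksRace ρ' (ks, γ₁) (ks₂, γ₂)

/-- `ρ` can be wiggled: wiggling its blocks one at a time yields a race-free padded run with
the same untimed trace. -/
def Wigglable (ρ : TimedRun A n) : Prop :=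
  ∃ ρ' : TimedRun A n, Relation.ReflTransGen WiggleStep ρ ρ' ∧ Padded ρ' ∧
    ¬ HasRace ρ' ∧ untime ρ' = untime ρ

/-- `A` is race-avoiding. -/
def RaceAvoiding (A : AT X I Q) : Prop :=
  ∀ (n : ℕ) (ρ : TimedRun A n), Padded ρ → HasRace ρ →
    ∃ (n' : ℕ) (ρ' : TimedRun A n'), Padded ρ' ∧ ¬ HasRace ρ' ∧ untime ρ' = untime ρ

/-- All delays of the run are strictly positive. -/
def AllPos (ρ : TimedRun A n) : Prop := ∀ j, 0 < ρ.delays j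

/-- `ks` is (the index sequence of) an `x`-block: its actions (re)start the timer `x`. -/
def IsXBlock (ρ : TimedRun A n) (ks : List (Fin n)) (x : X) : Prop :=
  ∃ k ∈ ks, ∃ c, ρ.upds k = some (x, c)

/-- Modified semantics from a total order on timers: in every race, any action of an `x`-block
is processed before any action of a `y`-block whenever `x < y`. -/
def OrderedSem [LT X] (ρ : TimedRun A n) : Prop :=
  ∀ (ks : List (Fin n)) (γ : Fate) (ks' : List (Fin n)) (γ' : Fate) (x y : X),
    IsBlock ρ ks γ → IsBlock ρ ks' γ' → IsXBlock ρ ks x → IsXBlock ρ ks' y → x < y →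
      ∀ k ∈ ks, ∀ k' ∈ ks',
        ((k < k' ∧ delayBetween ρ k k' = 0) ∨ (k' < k ∧ delayBetween ρ k' k = 0)) → k < k'

/-! ### Configurations, timer-equivalence and the region automaton -/

/-- Valuations `κ, κ'` (on the active timers of `q`) are timer-equivalent. -/
def ValEquiv (A : AT X I Q) (q : Q) (κ κ' : X → ℝ) : Prop :=
  ∀ x ∈ A.χ q, (⌊κ x⌋ = ⌊κ' x⌋) ∧ (Int.fract (κ x) = 0 ↔ Int.fract (κ' x) = 0) ∧
    ∀ y ∈ A.χ q, (Int.fract (κ x) ≤ Int.fract (κ y) ↔ Int.fract (κ' x) ≤ Int.fract (κ' y))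

/-- Timer-equivalence of configurations. -/
def ConfigEquiv (A : AT X I Q) (c c' : Q × (X → ℝ)) : Prop :=
  c.1 = c'.1 ∧ ValEquiv A c.1 c.2 c'.2

/-- A discrete transition between configurations, on action `a` with update `u`. -/
def DiscreteStep (A : AT X I Q) (c : Q × (X → ℝ)) (a : Act I X) (u : Upd X)
    (c' : Q × (X → ℝ)) : Prop :=
  A.δ c.1 a = some (c'.1, u) ∧ (∀ x, a = Act.timeout x → c.2 x = 0) ∧
    ∀ y ∈ A.χ c'.1,
      c'.2 y = u.elim (c.2 y) (fun p => if y = p.1 then ((p.2 : ℕ) : ℝ) else c.2 y)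

/-- A delay transition between configurations, of duration `d ≥ 0`. -/
def DelayStep (A : AT X I Q) (c : Q × (X → ℝ)) (d : ℝ) (c' : Q × (X → ℝ)) : Prop :=
  0 ≤ d ∧ c'.1 = c.1 ∧ (∀ x ∈ A.χ c.1, d ≤ c.2 x) ∧ ∀ x ∈ A.χ c.1, c'.2 x = c.2 x - d

/-- One step of a timed run between configurations: a delay or a discrete transition. -/
def Step (A : AT X I Q) (c c' : Q × (X → ℝ)) : Prop :=
  (∃ d, DelayStep A c d c') ∨ (∃ a u, DiscreteStep A c a u c')

/-- One transition of the region automaton between the classes of `c` and `c'`: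
some representatives are related by a positive delay (`τ`) or a discrete transition. -/
def RegStep (A : AT X I Q) (c c' : Q × (X → ℝ)) : Prop :=
  ∃ c₁ c₂, ConfigEquiv A c c₁ ∧ ConfigEquiv A c' c₂ ∧
    ((∃ d, 0 < d ∧ DelayStep A c₁ d c₂) ∨ ∃ a u, DiscreteStep A c₁ a u c₂)

/-! ### The extended run and relative elapsed time -/

open Classical in
/-- The timers discarded by the transition at index `k`. -/
noncomputable def discardedSet (ρ : TimedRun A n) (k : Fin n) : Finset X :=
  (A.χ (ρ.states k.castSucc)).filter (fun x => Discards ρ k x)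

/-- Positions of actions in the extended run of `ρ`: `(k, 0)` is the `k`-th action of `ρ`,
and `(k, j)` for `1 ≤ j` is the `j`-th zero-delay pseudo-action (`●` or `×`) inserted after
it, one for each timer it discards. -/
def EPos (ρ : TimedRun A n) : Type := {p : Fin n × ℕ // p.2 ≤ (discardedSet ρ p.1).card}

open Classical in
/-- Relative elapsed time between two positions of the extended run: the sum `d` of the delays
between them if the first occurs (weakly) before the second, and `-d` otherwise. -/
noncomputable def reltime (ρ : TimedRun A n) (p p' : EPos ρ) : ℝ :=
  if p.1.1 < p'.1.1 ∨ (p.1.1 = p'.1.1 ∧ p.1.2 ≤ p'.1.2) then delayBetween ρ p.1.1 p'.1.1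
  else - delayBetween ρ p'.1.1 p.1.1

/-! ### Auxiliary development -/

section Aux

variable {X I Q : Type} [DecidableEq X] {A : AT X I Q} {n : ℕ}

/-- Sum of a delay function over positions before `j`. -/
noncomputable def ptimeD (d : Fin (n+1) → ℝ) (j : Fin (n+1)) : ℝ :=
  ∑ p ∈ Finset.Iio j, d p

/-- Total elapsed time before position `j`. -/
noncomputable def ptime (ρ : TimedRun A n) (j : Fin (n+1)) : ℝ := ptimeD ρ.delays j

/-- Absolute time at which action `k` happens. -/
noncomputable def atimeD (d : Fin (n+1) → ℝ) (k : Fin n) : ℝ := ptimeD d k.succ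

/-- Absolute time of action `k` in run `ρ`. -/
noncomputable def atime (ρ : TimedRun A n) (k : Fin n) : ℝ := ptimeD ρ.delays k.succ

lemma Iio_succ_eq (k : Fin n) :
    (Finset.Iio (k.succ : Fin (n+1))) = insert k.castSucc (Finset.Iio k.castSucc) := by
  ext p
  simp only [Finset.mem_Iio, Finset.mem_insert, Fin.lt_def, Fin.ext_iff, Fin.val_succ,
    Fin.coe_castSucc]
  omega

lemma ptimeD_succ (d : Fin (n+1) → ℝ) (k : Fin n) :
    ptimeD d k.succ = ptimeD d k.castSucc + d k.castSucc := by
  rw [ptimeD, Iio_succ_eq, Finset.sum_insert (fun h => absurd (Finset.mem_Iio.mp h) (lt_irrefl _)), ptimeD]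
  ring

lemma atimeD_eq (d : Fin (n+1) → ℝ) (k : Fin n) :
    atimeD d k = ptimeD d k.castSucc + d k.castSucc := ptimeD_succ d k

lemma atime_def (ρ : TimedRun A n) (k : Fin n) : atime ρ k = ptime ρ k.succ := rfl

lemma atime_eq (ρ : TimedRun A n) (k : Fin n) :
    atime ρ k = ptime ρ k.castSucc + ρ.delays k.castSucc := ptimeD_succ _ k

lemma ptimeD_mono {d : Fin (n+1) → ℝ} (hd : ∀ p, 0 ≤ d p) {j j' : Fin (n+1)} (h : j ≤ j') :
    ptimeD d j ≤ ptimeD d j' :=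
  Finset.sum_le_sum_of_subset_of_nonneg (Finset.Iio_subset_Iio h) (fun p _ _ => hd p)

lemma ptime_mono (ρ : TimedRun A n) {j j' : Fin (n+1)} (h : j ≤ j') :
    ptime ρ j ≤ ptime ρ j' := ptimeD_mono ρ.delays_nonneg h

lemma atime_mono (ρ : TimedRun A n) {k k' : Fin n} (h : k ≤ k') :
    atime ρ k ≤ atime ρ k' := by
  apply ptimeD_mono ρ.delays_nonneg
  rw [Fin.le_def] at h ⊢
  simpa using Nat.succ_le_succ h

lemma delayBetween_eq (ρ : TimedRun A n) {k k' : Fin n} (h : k ≤ k') :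
    delayBetween ρ k k' = atime ρ k' - atime ρ k := by
  have himg : (Finset.Ioc k k').image Fin.castSucc
      = Finset.Ioc (k.castSucc : Fin (n+1)) k'.castSucc := by
    ext p
    simp only [Finset.mem_image, Finset.mem_Ioc, Fin.lt_def, Fin.le_def, Fin.coe_castSucc]
    constructor
    · rintro ⟨a, ⟨h1, h2⟩, rfl⟩; exact ⟨h1, h2⟩
    · rintro ⟨h1, h2⟩
      exact ⟨⟨(p : ℕ), lt_of_le_of_lt h2 k'.isLt⟩, ⟨h1, h2⟩, by simp [Fin.ext_iff]⟩
  have hsum : delayBetween ρ k k'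
      = ∑ p ∈ Finset.Ioc (k.castSucc : Fin (n+1)) k'.castSucc, ρ.delays p := by
    rw [← himg, Finset.sum_image (by intro a _ b _ hab; exact Fin.castSucc_injective _ hab)]
    rfl
  have hsplit : (Finset.Iio (k'.succ : Fin (n+1)))
      = Finset.Iio (k.succ : Fin (n+1)) ∪ Finset.Ioc (k.castSucc : Fin (n+1)) k'.castSucc := by
    ext p
    simp only [Finset.mem_Iio, Finset.mem_union, Finset.mem_Ioc, Fin.lt_def, Fin.le_def,
      Fin.val_succ, Fin.coe_castSucc]
    have := h
    rw [Fin.le_def] at this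
    omega
  have hdisj : Disjoint (Finset.Iio (k.succ : Fin (n+1)))
      (Finset.Ioc (k.castSucc : Fin (n+1)) k'.castSucc) := by
    rw [Finset.disjoint_left]
    intro p hp hp'
    simp only [Finset.mem_Iio, Finset.mem_Ioc, Fin.lt_def, Fin.le_def, Fin.val_succ,
      Fin.coe_castSucc] at hp hp'
    omega
  have : ptimeD ρ.delays k'.succ
      = ptimeD ρ.delays k.succ
        + ∑ p ∈ Finset.Ioc (k.castSucc : Fin (n+1)) k'.castSucc, ρ.delays p := by
    rw [ptimeD, hsplit, Finset.sum_union hdisj]; rfl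
  rw [hsum, atime, atime, this]; ring

lemma delayBetween_nonneg (ρ : TimedRun A n) (k k' : Fin n) :
    0 ≤ delayBetween ρ k k' :=
  Finset.sum_nonneg fun _ _ => ρ.delays_nonneg _

/-- total duration of the run -/
noncomputable def ttime (ρ : TimedRun A n) : ℝ :=
  ptime ρ (Fin.last n) + ρ.delays (Fin.last n)

lemma atime_le_ttime (ρ : TimedRun A n) (k : Fin n) : atime ρ k ≤ ttime ρ := by
  have h1 : atime ρ k ≤ ptime ρ (Fin.last n) := by
    apply ptimeD_mono ρ.delays_nonneg
    simp [Fin.le_def, Fin.val_succ, Fin.last]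
  have := ρ.delays_nonneg (Fin.last n)
  unfold ttime; linarith

lemma ptime_le_ttime (ρ : TimedRun A n) (j : Fin (n+1)) : ptime ρ j ≤ ttime ρ := by
  have h1 : ptime ρ j ≤ ptime ρ (Fin.last n) :=
    ptimeD_mono ρ.delays_nonneg (Fin.le_last j)
  have := ρ.delays_nonneg (Fin.last n)
  unfold ttime; linarith

end Aux

section Aux2

variable {X I Q : Type} [DecidableEq X] {A : AT X I Q} {n : ℕ}

/-- The timer valuations determined by delay function `d` and the untimed data of `ρ`. -/
noncomputable def mkVals (ρ : TimedRun A n) (d : Fin (n+1) → ℝ) : ℕ → X → ℝ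
  | 0, _ => 0
  | (j+1), y =>
    if h : j < n then
      (ρ.upds ⟨j, h⟩).elim (mkVals ρ d j y - d ⟨j, Nat.lt_succ_of_lt h⟩)
        (fun p => if y = p.1 then ((p.2 : ℕ) : ℝ)
          else mkVals ρ d j y - d ⟨j, Nat.lt_succ_of_lt h⟩)
    else 0

lemma vals_eq_mkVals (ρ : TimedRun A n) (y : X) (j : Fin (n+1)) :
    ρ.vals j y = mkVals ρ ρ.delays j.val y := by
  induction j using Fin.induction with
  | zero => simpa [mkVals] using ρ.init_val y
  | succ i ih =>
    rw [ρ.val_step i y]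
    show _ = mkVals ρ ρ.delays (i.val + 1) y
    simp only [mkVals, dif_pos i.isLt]
    have h1 : (⟨i.val, i.isLt⟩ : Fin n) = i := Fin.eta i i.isLt
    have h2 : (⟨i.val, Nat.lt_succ_of_lt i.isLt⟩ : Fin (n+1)) = i.castSucc := rfl
    have ih' : mkVals ρ ρ.delays i.val y = ρ.vals i.castSucc y := ih.symm
    rw [h1, h2, ih']

lemma mkVals_evol (ρ : TimedRun A n) (d : Fin (n+1) → ℝ) {k : Fin n} {x : X} {c : ℕ+}
    (hu : ρ.upds k = some (x, c)) :
    ∀ (j : Fin (n+1)), (k : ℕ) < (j : ℕ) →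
      (∀ m : Fin n, k < m → (m : ℕ) < (j : ℕ) →
          ρ.acts m ≠ Act.timeout x ∧ ¬ Discards ρ m x) →
      x ∈ A.χ (ρ.states j) ∧
        mkVals ρ d j.val x = ((c : ℕ) : ℝ) - (ptimeD d j - ptimeD d k.succ) := by
  intro j
  induction j using Fin.induction with
  | zero => intro h _; exact absurd h (by simp)
  | succ i ih =>
    intro hki hw
    have hki' : (k : ℕ) ≤ (i : ℕ) := by
      simp only [Fin.val_succ] at hki; omega
    rcases eq_or_lt_of_le hki' with heq | hlt
    · have hk : k = i := Fin.ext heq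
      subst hk
      have htr := ρ.trans k
      rw [hu] at htr
      refine ⟨A.update_mem _ _ _ _ _ htr, ?_⟩
      show mkVals ρ d (k.val + 1) x = _
      simp only [mkVals, dif_pos k.isLt]
      have h1 : (⟨k.val, k.isLt⟩ : Fin n) = k := Fin.eta k k.isLt
      rw [h1, hu]
      simp
    · have hki2 : k < i := Fin.lt_def.mpr hlt
      have hwin : ∀ m : Fin n, k < m → (m : ℕ) < ((i.castSucc : Fin (n+1)) : ℕ) →
          ρ.acts m ≠ Act.timeout x ∧ ¬ Discards ρ m x := by
        intro m hm1 hm2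
        apply hw m hm1
        simp only [Fin.coe_castSucc] at hm2
        simp only [Fin.val_succ]
        omega
      obtain ⟨hx, hv⟩ := ih (by simp only [Fin.coe_castSucc]; exact hlt) hwin
      obtain ⟨hto, hnd⟩ := hw i hki2 (by simp only [Fin.val_succ]; omega)
      have hact : x ∈ A.χ (ρ.states i.succ) := by
        by_contra h; exact hnd ⟨hx, hto, Or.inl h⟩
      have hnr : ∀ c', ρ.upds i ≠ some (x, c') := fun c' h => hnd ⟨hx, hto, Or.inr ⟨c', h⟩⟩
      refine ⟨hact, ?_⟩
      show mkVals ρ d (i.val + 1) x = _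
      simp only [mkVals, dif_pos i.isLt]
      have h1 : (⟨i.val, i.isLt⟩ : Fin n) = i := Fin.eta i i.isLt
      have h2 : (⟨i.val, Nat.lt_succ_of_lt i.isLt⟩ : Fin (n+1)) = i.castSucc := rfl
      rw [h1, h2]
      have hv' : mkVals ρ d i.val x
          = ((c : ℕ) : ℝ) - (ptimeD d i.castSucc - ptimeD d k.succ) := hv
      cases hupd : ρ.upds i with
      | none =>
        simp only [Option.elim]
        rw [hv', ptimeD_succ d i]
        ring
      | some p =>
        have hpx : x ≠ p.1 := by
          intro h
          exact hnr p.2 (by rw [hupd, h])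
        simp only [Option.elim, if_neg hpx]
        rw [hv', ptimeD_succ d i]
        ring

lemma evol (ρ : TimedRun A n) {k : Fin n} {x : X} {c : ℕ+}
    (hu : ρ.upds k = some (x, c)) (j : Fin (n+1)) (hj : (k : ℕ) < (j : ℕ))
    (hw : ∀ m : Fin n, k < m → (m : ℕ) < (j : ℕ) →
        ρ.acts m ≠ Act.timeout x ∧ ¬ Discards ρ m x) :
    x ∈ A.χ (ρ.states j) ∧ ρ.vals j x = ((c : ℕ) : ℝ) - (ptime ρ j - atime ρ k) := by
  have h := mkVals_evol ρ ρ.delays hu j hj hw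
  exact ⟨h.1, by rw [vals_eq_mkVals ρ x j]; exact h.2⟩

lemma act_timeout_active (ρ : TimedRun A n) {k' : Fin n} {x : X}
    (ha : ρ.acts k' = Act.timeout x) : x ∈ A.χ (ρ.states k'.castSucc) := by
  have h := ρ.trans k'
  have hs : (A.δ (ρ.states k'.castSucc) (ρ.acts k')).isSome := by rw [h]; rfl
  rcases (A.defined_iff _ _).mp hs with ⟨i, hi⟩ | ⟨y, hy, hxy⟩
  · rw [ha] at hi; cases hi
  · rw [ha] at hxy
    injection hxy with h'
    rwa [← h'] at hy

lemma active_start (ρ : TimedRun A n) :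
    ∀ (j : Fin (n+1)) (x : X), x ∈ A.χ (ρ.states j) →
      ∃ k : Fin n, (k : ℕ) < (j : ℕ) ∧ (∃ c, ρ.upds k = some (x, c)) ∧
        ∀ m : Fin n, k < m → (m : ℕ) < (j : ℕ) →
          ρ.acts m ≠ Act.timeout x ∧ ¬ Discards ρ m x := by
  intro j
  induction j using Fin.induction with
  | zero => intro x hx; rw [ρ.init_state, A.init_active] at hx; simp at hx
  | succ i ih =>
    intro x hx
    have htr := ρ.trans i
    cases hupd : ρ.upds i with
    | none =>
      rw [hupd] at htr
      have hx' : x ∈ A.χ (ρ.states i.castSucc) := A.noupdate_sub _ _ _ htr hx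
      have hto : ρ.acts i ≠ Act.timeout x := by
        intro ha; rw [ha] at htr; exact A.noupdate_timeout _ _ _ htr hx
      have hnd : ¬ Discards ρ i x := by
        rintro ⟨-, -, h | ⟨c', hc'⟩⟩
        · exact h hx
        · rw [hupd] at hc'; cases hc'
      obtain ⟨k, hk1, hk2, hk3⟩ := ih x hx'
      refine ⟨k, by simp only [Fin.val_succ]; simp only [Fin.coe_castSucc] at hk1; omega,
        hk2, ?_⟩
      intro m hm1 hm2
      rcases Nat.lt_or_ge (m : ℕ) (i : ℕ) with h | h
      · exact hk3 m hm1 (by simpa using h)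
      · have hmi : m = i := Fin.ext (by simp only [Fin.val_succ] at hm2; omega)
        subst hmi
        exact ⟨hto, hnd⟩
    | some p =>
      rw [hupd] at htr
      by_cases hpx : p.1 = x
      · refine ⟨i, by simp, ⟨p.2, by rw [hupd, ← hpx]⟩, ?_⟩
        intro m hm1 hm2
        exfalso
        rw [Fin.lt_def] at hm1
        simp only [Fin.val_succ] at hm2
        omega
      · have hx' : x ∈ A.χ (ρ.states i.castSucc) := by
          apply A.update_sub _ _ _ p.1 p.2 htr
          exact Finset.mem_sdiff.mpr ⟨hx, by simp only [Finset.mem_singleton]; exact fun h => hpx h.symm⟩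
        have hto : ρ.acts i ≠ Act.timeout x := by
          intro ha; rw [ha] at htr
          exact hpx (A.timeout_self _ _ _ _ _ htr)
        have hnd : ¬ Discards ρ i x := by
          rintro ⟨-, -, h | ⟨c', hc'⟩⟩
          · exact h hx
          · rw [hupd] at hc'
            injection hc' with h'
            exact hpx (congrArg Prod.fst h')
        obtain ⟨k, hk1, hk2, hk3⟩ := ih x hx'
        refine ⟨k, by simp only [Fin.val_succ]; simp only [Fin.coe_castSucc] at hk1; omega,
          hk2, ?_⟩
        intro m hm1 hm2
        rcases Nat.lt_or_ge (m : ℕ) (i : ℕ) with h | h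
        · exact hk3 m hm1 (by simpa using h)
        · have hmi : m = i := Fin.ext (by simp only [Fin.val_succ] at hm2; omega)
          subst hmi
          exact ⟨hto, hnd⟩

lemma timeout_triggered (ρ : TimedRun A n) {k' : Fin n} {x : X}
    (ha : ρ.acts k' = Act.timeout x) :
    ∃ k, Triggers ρ k k' ∧ ∃ c, ρ.upds k = some (x, c) := by
  obtain ⟨k, hk1, ⟨c, hc⟩, hk3⟩ := active_start ρ k'.castSucc x (act_timeout_active ρ ha)
  refine ⟨k, ⟨Fin.lt_def.mpr (by simpa using hk1), x, c, hc, ha, ?_⟩, c, hc⟩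
  intro ℓ h1 h2
  exact hk3 ℓ h1 (by simpa using Fin.lt_def.mp h2)

lemma trig_atime (ρ : TimedRun A n) {k k' : Fin n} {x : X} {c : ℕ+}
    (h : Triggers ρ k k') (hu : ρ.upds k = some (x, c)) :
    atime ρ k' = atime ρ k + ((c : ℕ) : ℝ) := by
  obtain ⟨hlt, x', c', hu', ha', hw⟩ := h
  rw [hu] at hu'
  simp only [Option.some.injEq, Prod.mk.injEq] at hu'
  obtain ⟨rfl, rfl⟩ := hu'
  have hev := evol ρ hu k'.castSucc (by simpa using Fin.lt_def.mp hlt)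
    (fun m h1 h2 => hw m h1 (Fin.lt_def.mpr (by simpa using h2)))
  have htz := ρ.timeout_zero k' x ha'
  have hae := atime_eq ρ k'
  linarith [hev.2, htz, hae]

lemma trig_succ_unique (ρ : TimedRun A n) {k a b : Fin n}
    (h1 : Triggers ρ k a) (h2 : Triggers ρ k b) : a = b := by
  obtain ⟨hla, x, c, hu, ha, hwa⟩ := h1
  obtain ⟨hlb, x', c', hu', hb, hwb⟩ := h2
  rw [hu] at hu'
  simp only [Option.some.injEq, Prod.mk.injEq] at hu'
  obtain ⟨rfl, rfl⟩ := hu'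
  rcases lt_trichotomy a b with h | h | h
  · exact absurd ha (hwb a hla h).1
  · exact h
  · exact absurd hb (hwa b hlb h).1

lemma trig_pred_unique_aux (ρ : TimedRun A n) {a b k' : Fin n}
    (h1 : Triggers ρ a k') (h2 : Triggers ρ b k') (hab : a < b) : False := by
  obtain ⟨hla, x, c, hu, ha, hwa⟩ := h1
  obtain ⟨hlb, x', c', hu', hb, hwb⟩ := h2
  rw [ha] at hb
  injection hb with hxx
  subst hxx
  have hev := evol ρ hu b.castSucc (by simpa using Fin.lt_def.mp hab)
    (fun m hm1 hm2 => hwa m hm1 (Fin.lt_def.mpr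
      (by simp only [Fin.coe_castSucc] at hm2; exact lt_trans hm2 (Fin.lt_def.mp hlb))))
  exact (hwa b hab hlb).2 ⟨hev.1, (hwa b hab hlb).1, Or.inr ⟨c', hu'⟩⟩

lemma trig_pred_unique (ρ : TimedRun A n) {a b k' : Fin n}
    (h1 : Triggers ρ a k') (h2 : Triggers ρ b k') : a = b := by
  rcases lt_trichotomy a b with h | h | h
  · exact absurd (trig_pred_unique_aux ρ h1 h2 h) (fun h => h.elim)
  · exact h
  · exact absurd (trig_pred_unique_aux ρ h2 h1 h) (fun h => h.elim)

end Aux2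

section Aux3

variable {X I Q : Type} [DecidableEq X] {A : AT X I Q} {n : ℕ}

open Classical in
/-- The maximal trigger chain starting at action `k`. -/
noncomputable def chainFrom (ρ : TimedRun A n) (k : Fin n) : List (Fin n) :=
  k :: (if h : ∃ k', Triggers ρ k k' then chainFrom ρ h.choose else [])
termination_by n - k.val
decreasing_by
  have h1 := Fin.lt_def.mp h.choose_spec.1
  have h2 := k.isLt
  omega

lemma chainFrom_ne_nil (ρ : TimedRun A n) (k : Fin n) : chainFrom ρ k ≠ [] := by
  rw [chainFrom]; exact List.cons_ne_nil _ _

lemma chainFrom_head (ρ : TimedRun A n) (k : Fin n) : (chainFrom ρ k).head? = some k := by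
  rw [chainFrom]; rfl

lemma mem_chainFrom_self (ρ : TimedRun A n) (k : Fin n) : k ∈ chainFrom ρ k := by
  rw [chainFrom]; exact List.mem_cons_self

lemma getLast?_cons_of_ne_nil {α : Type*} {l : List α} (h : l ≠ []) (a : α) :
    (a :: l).getLast? = l.getLast? := by
  cases l with
  | nil => exact absurd rfl h
  | cons b t => exact List.getLast?_cons_cons

lemma chainFrom_closed (ρ : TimedRun A n) {a b : Fin n} (hab : Triggers ρ a b) :
    ∀ (fuel : ℕ) (k : Fin n), n - k.val ≤ fuel → a ∈ chainFrom ρ k → b ∈ chainFrom ρ k := by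
  intro fuel
  induction fuel with
  | zero => intro k hf _; have := k.isLt; omega
  | succ f ihf =>
    intro k hf ha
    rw [chainFrom] at ha ⊢
    rcases List.mem_cons.mp ha with rfl | ha'
    · have hex : ∃ k', Triggers ρ a k' := ⟨b, hab⟩
      rw [dif_pos hex] at *
      have hcb : hex.choose = b := trig_succ_unique ρ hex.choose_spec hab
      exact List.mem_cons.mpr (Or.inr (hcb ▸ mem_chainFrom_self ρ hex.choose))
    · by_cases hex : ∃ k', Triggers ρ k k'
      · rw [dif_pos hex] at ha' ⊢
        have hlt := Fin.lt_def.mp hex.choose_spec.1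
        have := k.isLt
        exact List.mem_cons.mpr (Or.inr (ihf hex.choose (by omega) ha'))
      · rw [dif_neg hex] at ha'; cases ha'

lemma reach_mem_chainFrom (ρ : TimedRun A n) {k m : Fin n}
    (h : Relation.ReflTransGen (Triggers ρ) k m) : m ∈ chainFrom ρ k := by
  induction h with
  | refl => exact mem_chainFrom_self ρ k
  | tail h1 h2 ih => exact chainFrom_closed ρ h2 (n - k.val) k le_rfl ih

lemma mem_chainFrom_reach (ρ : TimedRun A n) :
    ∀ (fuel : ℕ) (k m : Fin n), n - k.val ≤ fuel → m ∈ chainFrom ρ k →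
      Relation.ReflTransGen (Triggers ρ) k m := by
  intro fuel
  induction fuel with
  | zero => intro k m hf _; have := k.isLt; omega
  | succ f ihf =>
    intro k m hf hm
    rw [chainFrom] at hm
    rcases List.mem_cons.mp hm with rfl | hm'
    · exact Relation.ReflTransGen.refl
    · by_cases hex : ∃ k', Triggers ρ k k'
      · rw [dif_pos hex] at hm'
        have hlt := Fin.lt_def.mp hex.choose_spec.1
        have := k.isLt
        exact Relation.ReflTransGen.head hex.choose_spec (ihf hex.choose m (by omega) hm')
      · rw [dif_neg hex] at hm'; cases hm'

lemma chainFrom_chain' (ρ : TimedRun A n) :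
    ∀ (fuel : ℕ) (k : Fin n), n - k.val ≤ fuel → List.Chain' (Triggers ρ) (chainFrom ρ k) := by
  intro fuel
  induction fuel with
  | zero => intro k hf; have := k.isLt; omega
  | succ f ihf =>
    intro k hf
    rw [chainFrom]
    by_cases hex : ∃ k', Triggers ρ k k'
    · rw [dif_pos hex]
      apply List.isChain_cons.mpr
      refine ⟨?_, ?_⟩
      · intro b hb
        rw [chainFrom_head] at hb
        injection hb with hb'
        rw [← hb']
        exact hex.choose_spec
      · have hlt := Fin.lt_def.mp hex.choose_spec.1
        have := k.isLt
        exact ihf hex.choose (by omega)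
    · rw [dif_neg hex]
      exact List.isChain_singleton _

lemma chainFrom_last_no_succ (ρ : TimedRun A n) :
    ∀ (fuel : ℕ) (k : Fin n), n - k.val ≤ fuel →
      ∀ l k', (chainFrom ρ k).getLast? = some l → ¬ Triggers ρ l k' := by
  intro fuel
  induction fuel with
  | zero => intro k hf; have := k.isLt; omega
  | succ f ihf =>
    intro k hf l k' hl
    rw [chainFrom] at hl
    by_cases hex : ∃ k'', Triggers ρ k k''
    · rw [dif_pos hex, getLast?_cons_of_ne_nil (chainFrom_ne_nil ρ _)] at hl
      have hlt := Fin.lt_def.mp hex.choose_spec.1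
      have := k.isLt
      exact ihf hex.choose (by omega) l k' hl
    · rw [dif_neg hex] at hl
      injection hl with hl'
      rw [← hl']
      exact fun h => hex ⟨k', h⟩

lemma eq_chainFrom (ρ : TimedRun A n) :
    ∀ (ks : List (Fin n)) (k : Fin n), ks.head? = some k →
      List.Chain' (Triggers ρ) ks → (∀ l k', ks.getLast? = some l → ¬ Triggers ρ l k') →
      ks = chainFrom ρ k := by
  intro ks
  induction ks with
  | nil => intro k h; cases h
  | cons a t iht =>
    intro k hh hc hm
    injection hh with ha
    subst ha
    cases t with
    | nil =>
      rw [chainFrom, dif_neg]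
      rintro ⟨k', hk'⟩
      exact hm a k' rfl hk'
    | cons b t' =>
      have htr : Triggers ρ a b := (List.isChain_cons_cons.mp hc).1
      have hex : ∃ k', Triggers ρ a k' := ⟨b, htr⟩
      rw [chainFrom, dif_pos hex]
      have hcb : hex.choose = b := trig_succ_unique ρ hex.choose_spec htr
      rw [hcb]
      congr 1
      exact iht b rfl (List.isChain_cons_cons.mp hc).2
        (fun l k' hl => hm l k' (by rw [List.getLast?_cons_cons]; exact hl))

open Classical in
/-- The first action of the maximal trigger chain through `ℓ`. -/
noncomputable def rootOf (ρ : TimedRun A n) (ℓ : Fin n) : Fin n :=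
  if h : ∃ k, Triggers ρ k ℓ then rootOf ρ h.choose else ℓ
termination_by ℓ.val
decreasing_by
  exact Fin.lt_def.mp h.choose_spec.1

lemma rootOf_no_pred (ρ : TimedRun A n) :
    ∀ (fuel : ℕ) (ℓ : Fin n), ℓ.val ≤ fuel → ¬ ∃ k, Triggers ρ k (rootOf ρ ℓ) := by
  intro fuel
  induction fuel with
  | zero =>
    intro ℓ hf
    have hnex : ¬ ∃ k, Triggers ρ k ℓ := by
      rintro ⟨k, hk⟩
      have := Fin.lt_def.mp hk.1
      omega
    rw [rootOf, dif_neg hnex]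
    exact hnex
  | succ f ihf =>
    intro ℓ hf
    rw [rootOf]
    by_cases hex : ∃ k, Triggers ρ k ℓ
    · rw [dif_pos hex]
      have := Fin.lt_def.mp hex.choose_spec.1
      exact ihf hex.choose (by omega)
    · rw [dif_neg hex]
      exact hex

lemma rootOf_reach (ρ : TimedRun A n) :
    ∀ (fuel : ℕ) (ℓ : Fin n), ℓ.val ≤ fuel →
      Relation.ReflTransGen (Triggers ρ) (rootOf ρ ℓ) ℓ := by
  intro fuel
  induction fuel with
  | zero =>
    intro ℓ hf
    have hnex : ¬ ∃ k, Triggers ρ k ℓ := by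
      rintro ⟨k, hk⟩
      have := Fin.lt_def.mp hk.1
      omega
    rw [rootOf, dif_neg hnex]
  | succ f ihf =>
    intro ℓ hf
    rw [rootOf]
    by_cases hex : ∃ k, Triggers ρ k ℓ
    · rw [dif_pos hex]
      have := Fin.lt_def.mp hex.choose_spec.1
      exact Relation.ReflTransGen.tail (ihf hex.choose (by omega)) hex.choose_spec
    · rw [dif_neg hex]

lemma rootOf_input (ρ : TimedRun A n) (ℓ : Fin n) :
    ∃ i, ρ.acts (rootOf ρ ℓ) = Act.input i := by
  cases ha : ρ.acts (rootOf ρ ℓ) with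
  | input i => exact ⟨i, rfl⟩
  | timeout x =>
    exfalso
    obtain ⟨k, hk, -⟩ := timeout_triggered ρ ha
    exact rootOf_no_pred ρ ℓ.val ℓ le_rfl ⟨k, hk⟩

/-- The (index list of the) block containing action `ℓ`. -/
noncomputable def blockOf (ρ : TimedRun A n) (ℓ : Fin n) : List (Fin n) :=
  chainFrom ρ (rootOf ρ ℓ)

lemma mem_blockOf_self (ρ : TimedRun A n) (ℓ : Fin n) : ℓ ∈ blockOf ρ ℓ :=
  reach_mem_chainFrom ρ (rootOf_reach ρ ℓ.val ℓ le_rfl)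

lemma back_confluence (ρ : TimedRun A n) :
    ∀ (fuel : ℕ) (ℓ a a' : Fin n), ℓ.val ≤ fuel →
      Relation.ReflTransGen (Triggers ρ) a ℓ → Relation.ReflTransGen (Triggers ρ) a' ℓ →
      Relation.ReflTransGen (Triggers ρ) a a' ∨ Relation.ReflTransGen (Triggers ρ) a' a := by
  intro fuel
  induction fuel with
  | zero =>
    intro ℓ a a' hf h1 h2
    rcases h1.cases_tail with heq1 | ⟨c, hc1, hc2⟩
    · subst heq1; exact Or.inr h2
    · have := Fin.lt_def.mp hc2.1; omega
  | succ f ihf =>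
    intro ℓ a a' hf h1 h2
    rcases h1.cases_tail with heq1 | ⟨c, hc1, hc2⟩
    · subst heq1; exact Or.inr h2
    · rcases h2.cases_tail with heq2 | ⟨c', hc1', hc2'⟩
      · subst heq2; exact Or.inl h1
      · have hcc : c = c' := trig_pred_unique ρ hc2 hc2'
        subst hcc
        have := Fin.lt_def.mp hc2.1
        exact ihf c a a' (by omega) hc1 hc1'

lemma reach_no_pred_eq (ρ : TimedRun A n) {a a' : Fin n}
    (h : Relation.ReflTransGen (Triggers ρ) a a') (hnp : ¬ ∃ p, Triggers ρ p a') : a = a' := by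
  rcases h.cases_tail with heq | ⟨c, -, hc⟩
  · exact heq.symm
  · exact absurd ⟨c, hc⟩ hnp

lemma input_no_pred (ρ : TimedRun A n) {a : Fin n} {i : I}
    (hi : ρ.acts a = Act.input i) : ¬ ∃ p, Triggers ρ p a := by
  rintro ⟨p, hp⟩
  obtain ⟨-, x, c, -, ha, -⟩ := hp
  rw [hi] at ha
  cases ha

lemma isBlock_eq_chainFrom {ρ : TimedRun A n} {ks : List (Fin n)} {γ : Fate}
    (hb : IsBlock ρ ks γ) : ∃ a t, ks = a :: t ∧ ks = chainFrom ρ a := by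
  obtain ⟨h1, h2, h3, h4, h5⟩ := hb
  cases ks with
  | nil => exact absurd rfl h1
  | cons a t => exact ⟨a, t, rfl, eq_chainFrom ρ (a :: t) a rfl h2 h4⟩

lemma block_eq_of_mem {ρ : TimedRun A n} {ks ks' : List (Fin n)} {γ γ' : Fate}
    (h1 : IsBlock ρ ks γ) (h2 : IsBlock ρ ks' γ') {m : Fin n}
    (hm : m ∈ ks) (hm' : m ∈ ks') : ks = ks' := by
  obtain ⟨a, t, heq, hch⟩ := isBlock_eq_chainFrom h1
  obtain ⟨a', t', heq', hch'⟩ := isBlock_eq_chainFrom h2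
  have hr : Relation.ReflTransGen (Triggers ρ) a m :=
    mem_chainFrom_reach ρ (n - a.val) a m le_rfl (hch ▸ hm)
  have hr' : Relation.ReflTransGen (Triggers ρ) a' m :=
    mem_chainFrom_reach ρ (n - a'.val) a' m le_rfl (hch' ▸ hm')
  obtain ⟨ia, hia⟩ := h1.2.2.1 a (by rw [heq]; rfl)
  obtain ⟨ia', hia'⟩ := h2.2.2.1 a' (by rw [heq']; rfl)
  have haa : a = a' := by
    rcases back_confluence ρ m.val m a a' le_rfl hr hr' with h | h
    · exact reach_no_pred_eq ρ h (input_no_pred ρ hia')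
    · exact (reach_no_pred_eq ρ h (input_no_pred ρ hia)).symm
  rw [hch, hch', haa]

lemma block_closed_succ {ρ : TimedRun A n} {ks : List (Fin n)} {γ : Fate}
    (hb : IsBlock ρ ks γ) {a b : Fin n} (ha : a ∈ ks) (hab : Triggers ρ a b) : b ∈ ks := by
  obtain ⟨c, t, heq, hch⟩ := isBlock_eq_chainFrom hb
  rw [hch] at ha ⊢
  exact chainFrom_closed ρ hab (n - c.val) c le_rfl ha

lemma chain'_mem_pred {α : Type*} {R : α → α → Prop} :
    ∀ (l : List α) (a : α), List.Chain' R l → l.head? = some a →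
      ∀ b ∈ l, b = a ∨ ∃ p ∈ l, R p b := by
  intro l
  induction l with
  | nil => intro a _ h; cases h
  | cons c t ih =>
    intro a hc hh b hb
    injection hh with hca
    subst hca
    rcases List.mem_cons.mp hb with rfl | hb'
    · exact Or.inl rfl
    · cases t with
      | nil => cases hb'
      | cons d t' =>
        rcases ih d (List.isChain_cons_cons.mp hc).2 rfl b hb' with rfl | ⟨p, hp, hpb⟩
        · exact Or.inr ⟨c, List.mem_cons_self, (List.isChain_cons_cons.mp hc).1⟩
        · exact Or.inr ⟨p, List.mem_cons.mpr (Or.inr hp), hpb⟩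

lemma block_closed_pred {ρ : TimedRun A n} {ks : List (Fin n)} {γ : Fate}
    (hb : IsBlock ρ ks γ) {a b : Fin n} (hbmem : b ∈ ks) (hab : Triggers ρ a b) : a ∈ ks := by
  obtain ⟨c, t, heq, hch⟩ := isBlock_eq_chainFrom hb
  rcases chain'_mem_pred ks c hb.2.1 (by rw [heq]; rfl) b hbmem with rfl | ⟨p, hp, hpb⟩
  · exfalso
    obtain ⟨i, hi⟩ := hb.2.2.1 b (by rw [heq]; rfl)
    exact input_no_pred ρ hi ⟨a, hab⟩
  · rwa [trig_pred_unique ρ hab hpb]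

lemma chain'_getLast_of_no_succ {α : Type*} {R : α → α → Prop} :
    ∀ (l : List α), List.Chain' R l → ∀ k, k ∈ l → (∀ b, ¬ R k b) → l.getLast? = some k := by
  intro l
  induction l with
  | nil => intro _ k hk; cases hk
  | cons a t ih =>
    intro hc k hk hns
    cases t with
    | nil =>
      rcases List.mem_cons.mp hk with rfl | h
      · rfl
      · cases h
    | cons b t' =>
      rcases List.mem_cons.mp hk with rfl | hk'
      · exact absurd (List.isChain_cons_cons.mp hc).1 (hns b)
      · rw [List.getLast?_cons_cons]
        exact ih (List.isChain_cons_cons.mp hc).2 k hk' hns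

lemma block_getLast_of_no_succ {ρ : TimedRun A n} {ks : List (Fin n)} {γ : Fate}
    (hb : IsBlock ρ ks γ) {k : Fin n} (hk : k ∈ ks) (hns : ∀ b, ¬ Triggers ρ k b) :
    ks.getLast? = some k :=
  chain'_getLast_of_no_succ ks hb.2.1 k hk hns

lemma block_pairwise {ρ : TimedRun A n} {ks : List (Fin n)} {γ : Fate}
    (hb : IsBlock ρ ks γ) : List.Pairwise (· < ·) ks :=
  List.isChain_iff_pairwise.mp (List.IsChain.imp (fun _ _ h => h.1) hb.2.1)

lemma mem_of_getLast?' {α : Type*} :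
    ∀ (l : List α) (b : α), l.getLast? = some b → b ∈ l := by
  intro l
  induction l with
  | nil => intro b h; cases h
  | cons a t ih =>
    intro b hb
    cases t with
    | nil =>
      have : a = b := by simpa using hb
      exact this ▸ List.mem_cons_self
    | cons c t' =>
      rw [List.getLast?_cons_cons] at hb
      exact List.mem_cons.mpr (Or.inr (ih b hb))

lemma mem_le_getLast {α : Type*} [LinearOrder α] :
    ∀ (l : List α), List.Pairwise (· < ·) l → ∀ {a b : α}, a ∈ l → l.getLast? = some b →
      a ≤ b := by
  intro l
  induction l with
  | nil => intro _ a b h; cases h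
  | cons c t ih =>
    intro hp a b ha hb
    cases t with
    | nil =>
      rcases List.mem_cons.mp ha with rfl | h
      · have : a = b := by simpa using hb
        exact le_of_eq this
      · cases h
    | cons d t' =>
      rw [List.getLast?_cons_cons] at hb
      have hbt : b ∈ d :: t' := mem_of_getLast?' _ b hb
      rcases List.mem_cons.mp ha with rfl | ha'
      · exact le_of_lt ((List.pairwise_cons.mp hp).1 b hbt)
      · exact ih (List.pairwise_cons.mp hp).2 ha' hb

instance : Fintype Fate :=
  ⟨⟨{Fate.bot, Fate.disc0, Fate.cross}, by decide⟩, fun x => by cases x <;> decide⟩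

open Classical in
/-- The fate of the chain `ks` in run `ρ`. -/
noncomputable def fateOf (ρ : TimedRun A n) (ks : List (Fin n)) : Fate :=
  if _ : ∃ k x c, ks.getLast? = some k ∧ ρ.upds k = some (x, c) ∧
      DiscardedAtZeroAfter ρ k x then Fate.disc0
  else if _ : ∃ k x c, ks.getLast? = some k ∧ ρ.upds k = some (x, c) then Fate.cross
  else Fate.bot

lemma fateOf_spec (ρ : TimedRun A n) (ks : List (Fin n)) : FateOf ρ ks (fateOf ρ ks) := by
  intro k hk
  constructor
  · intro hnone
    have hno1 : ¬ ∃ k' x c, ks.getLast? = some k' ∧ ρ.upds k' = some (x, c) ∧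
        DiscardedAtZeroAfter ρ k' x := by
      rintro ⟨k', x, c, hk', hu, -⟩
      rw [hk] at hk'
      injection hk' with h
      rw [← h, hnone] at hu
      cases hu
    have hno2 : ¬ ∃ k' x c, ks.getLast? = some k' ∧ ρ.upds k' = some (x, c) := by
      rintro ⟨k', x, c, hk', hu⟩
      rw [hk] at hk'
      injection hk' with h
      rw [← h, hnone] at hu
      cases hu
    simp only [fateOf, dif_neg hno1, dif_neg hno2]
  · intro x c hu
    constructor
    · intro hd
      have hyes : ∃ k' x c, ks.getLast? = some k' ∧ ρ.upds k' = some (x, c) ∧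
          DiscardedAtZeroAfter ρ k' x := ⟨k, x, c, hk, hu, hd⟩
      simp only [fateOf, dif_pos hyes]
    · intro hnd
      have hno1 : ¬ ∃ k' x c, ks.getLast? = some k' ∧ ρ.upds k' = some (x, c) ∧
          DiscardedAtZeroAfter ρ k' x := by
        rintro ⟨k', x', c', hk', hu', hd'⟩
        rw [hk] at hk'
        injection hk' with h
        subst h
        rw [hu] at hu'
        simp only [Option.some.injEq, Prod.mk.injEq] at hu'
        obtain ⟨rfl, rfl⟩ := hu'
        exact hnd hd'
      have hyes2 : ∃ k' x c, ks.getLast? = some k' ∧ ρ.upds k' = some (x, c) :=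
        ⟨k, x, c, hk, hu⟩
      simp only [fateOf, dif_neg hno1, dif_pos hyes2]

lemma fate_unique {ρ : TimedRun A n} {ks : List (Fin n)} {γ γ' : Fate}
    (hne : ks ≠ []) (h1 : FateOf ρ ks γ) (h2 : FateOf ρ ks γ') : γ = γ' := by
  have hsome : ks.getLast?.isSome := List.getLast?_isSome.mpr hne
  obtain ⟨k, hk⟩ := Option.isSome_iff_exists.mp hsome
  cases hu : ρ.upds k with
  | none => rw [(h1 k hk).1 hu, (h2 k hk).1 hu]
  | some p =>
    by_cases hd : DiscardedAtZeroAfter ρ k p.1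
    · rw [((h1 k hk).2 p.1 p.2 (by rw [hu]) ).1 hd, ((h2 k hk).2 p.1 p.2 (by rw [hu])).1 hd]
    · rw [((h1 k hk).2 p.1 p.2 (by rw [hu])).2 hd, ((h2 k hk).2 p.1 p.2 (by rw [hu])).2 hd]

section Transfer

variable {ρ ρ' : TimedRun A n}

lemma discards_congr (hst : ρ'.states = ρ.states) (hac : ρ'.acts = ρ.acts)
    (hup : ρ'.upds = ρ.upds) : Discards ρ' = Discards ρ := by
  funext ℓ x
  unfold Discards
  rw [hst, hac, hup]

lemma triggers_congr (hst : ρ'.states = ρ.states) (hac : ρ'.acts = ρ.acts)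
    (hup : ρ'.upds = ρ.upds) : Triggers ρ' = Triggers ρ := by
  funext k k'
  unfold Triggers
  rw [hac, hup, discards_congr hst hac hup]

lemma isBlock_transfer (hst : ρ'.states = ρ.states) (hac : ρ'.acts = ρ.acts)
    (hup : ρ'.upds = ρ.upds) {ks : List (Fin n)} {γ : Fate} (hb : IsBlock ρ ks γ) :
    IsBlock ρ' ks (fateOf ρ' ks) := by
  obtain ⟨h1, h2, h3, h4, h5⟩ := hb
  refine ⟨h1, ?_, ?_, ?_, fateOf_spec ρ' ks⟩
  · rw [triggers_congr hst hac hup]; exact h2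
  · intro k hk; rw [hac]; exact h3 k hk
  · intro k k' hk; rw [triggers_congr hst hac hup]; exact h4 k k' hk

end Transfer

lemma isBlock_blockOf (ρ : TimedRun A n) (ℓ : Fin n) :
    IsBlock ρ (blockOf ρ ℓ) (fateOf ρ (blockOf ρ ℓ)) := by
  refine ⟨chainFrom_ne_nil ρ _, chainFrom_chain' ρ _ _ le_rfl, ?_, ?_, fateOf_spec ρ _⟩
  · intro k hk
    have hk' : (chainFrom ρ (rootOf ρ ℓ)).head? = some k := hk
    rw [chainFrom_head] at hk'
    injection hk' with h
    rw [← h]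
    exact rootOf_input ρ ℓ
  · intro k k' hk
    exact chainFrom_last_no_succ ρ _ _ le_rfl k k' hk

lemma blocks_finite (ρ : TimedRun A n) :
    {p : List (Fin n) × Fate | IsBlock ρ p.1 p.2}.Finite := by
  apply Set.Finite.subset
    ((Set.finite_range (chainFrom ρ)).prod (Set.finite_univ : (Set.univ : Set Fate).Finite))
  rintro ⟨l, γ⟩ hb
  obtain ⟨a, t, heq, hch⟩ := isBlock_eq_chainFrom hb
  exact ⟨⟨a, hch.symm⟩, Set.mem_univ _⟩

end Aux3

section Aux4

variable {X I Q : Type} [DecidableEq X] {A : AT X I Q} {n : ℕ}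

lemma block_atime_gap {ρ : TimedRun A n} {ks : List (Fin n)} {γ : Fate}
    (hb : IsBlock ρ ks γ) {a b : Fin n} (ha : a ∈ ks) (hbm : b ∈ ks) (hab : a < b) :
    atime ρ a + 1 ≤ atime ρ b := by
  set R' : Fin n → Fin n → Prop := fun u v => u < v ∧ atime ρ u + 1 ≤ atime ρ v with hR'
  letI : IsTrans (Fin n) R' :=
    ⟨fun u v w h1 h2 => ⟨lt_trans h1.1 h2.1, by linarith [h1.2, h2.2]⟩⟩
  have hch : List.Chain' R' ks := by
    apply List.IsChain.imp ?_ hb.2.1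
    intro u v huv
    refine ⟨huv.1, ?_⟩
    obtain ⟨x, c, hu, -⟩ := huv.2
    have h := trig_atime ρ huv hu
    have hc1 : 1 ≤ (c : ℕ) := c.2
    have hc1' : (1 : ℝ) ≤ ((c : ℕ) : ℝ) := by exact_mod_cast hc1
    linarith
  have hp := List.pairwise_iff_get.mp (List.isChain_iff_pairwise.mp hch)
  obtain ⟨ia, hia⟩ := List.mem_iff_get.mp ha
  obtain ⟨ib, hib⟩ := List.mem_iff_get.mp hbm
  rcases lt_trichotomy ia ib with h | h | h
  · have h2 := hp ia ib h
    rw [hia, hib] at h2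
    exact h2.2
  · rw [h, hib] at hia
    exact absurd hia (ne_of_gt hab)
  · have h2 := hp ib ia h
    rw [hia, hib] at h2
    exact absurd h2.1 (not_lt.mpr (le_of_lt hab))

lemma block_delayBetween_pos {ρ : TimedRun A n} {ks : List (Fin n)} {γ : Fate}
    (hb : IsBlock ρ ks γ) {a b : Fin n} (ha : a ∈ ks) (hbm : b ∈ ks) (hab : a < b) :
    1 ≤ delayBetween ρ a b := by
  rw [delayBetween_eq ρ (le_of_lt hab)]
  linarith [block_atime_gap hb ha hbm hab]

lemma prec_irrefl {ρ : TimedRun A n} {ks : List (Fin n)} {γ : Fate}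
    (hb : IsBlock ρ ks γ) : ¬ Prec ρ (ks, γ) (ks, γ) := by
  rintro (⟨k, hk, k', hk', hlt, hz⟩ | ⟨-, k', x, c, hlast, -, ℓ, hℓ, hlt, -⟩)
  · have := block_delayBetween_pos hb hk hk' hlt
    linarith [hz]
  · have := mem_le_getLast _ (block_pairwise hb) hℓ hlast
    exact absurd hlt (not_lt.mpr this)

lemma blocks_ne_lists {ρ : TimedRun A n} {B B' : List (Fin n) × Fate}
    (h1 : IsBlock ρ B.1 B.2) (h2 : IsBlock ρ B'.1 B'.2) (hne : B ≠ B') : B.1 ≠ B'.1 := by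
  intro h
  apply hne
  have hf1 := h1.2.2.2.2
  have hf2 := h2.2.2.2.2
  rw [← h] at hf2
  exact Prod.ext h (fate_unique h1.1 hf1 hf2)

/-- The set of racing pairs of blocks (by their index lists). -/
def RacePairs (ρ : TimedRun A n) : Set (List (Fin n) × List (Fin n)) :=
  {q | ∃ γ γ', IsBlock ρ q.1 γ ∧ IsBlock ρ q.2 γ' ∧ q.1 ≠ q.2 ∧
    BlocksRace ρ (q.1, γ) (q.2, γ')}

lemma racePairs_finite (ρ : TimedRun A n) : (RacePairs ρ).Finite := by
  apply Set.Finite.subset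
    ((Set.finite_range (chainFrom ρ)).prod (Set.finite_range (chainFrom ρ)))
  rintro ⟨l1, l2⟩ ⟨γ, γ', hb1, hb2, -, -⟩
  obtain ⟨a, t, heq, hch⟩ := isBlock_eq_chainFrom hb1
  obtain ⟨a', t', heq', hch'⟩ := isBlock_eq_chainFrom hb2
  exact ⟨⟨a, hch.symm⟩, ⟨a', hch'.symm⟩⟩

lemma hasRace_iff (ρ : TimedRun A n) : HasRace ρ ↔ (RacePairs ρ).Nonempty := by
  constructor
  · rintro ⟨B, B', h1, h2, hne, hr⟩
    exact ⟨(B.1, B'.1), B.2, B'.2, h1, h2, blocks_ne_lists h1 h2 hne, hr⟩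
  · rintro ⟨⟨l1, l2⟩, γ, γ', h1, h2, hne, hr⟩
    exact ⟨(l1, γ), (l2, γ'), h1, h2, fun h => hne (congrArg Prod.fst h), hr⟩

/-- `B` is a block participating in some race. -/
def Racing (ρ : TimedRun A n) (B : List (Fin n) × Fate) : Prop :=
  IsBlock ρ B.1 B.2 ∧ ∃ B', IsBlock ρ B'.1 B'.2 ∧ B'.1 ≠ B.1 ∧ BlocksRace ρ B B'

lemma exists_racing_sink (ρ : TimedRun A n) (hnc : ¬ HasCycle ρ) (hr : HasRace ρ) :
    ∃ B : List (Fin n) × Fate, Racing ρ B ∧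
      ∀ l γ', IsBlock ρ l γ' → l ≠ B.1 → ¬ Prec ρ B (l, γ') := by
  by_contra hno
  push_neg at hno
  have hstep : ∀ B, Racing ρ B → ∃ B', Racing ρ B' ∧ B'.1 ≠ B.1 ∧ Prec ρ B B' := by
    intro B hB
    obtain ⟨l, γ', hbl, hne, hprec⟩ := hno B hB
    exact ⟨(l, γ'), ⟨hbl, B, hB.1, fun h => hne h.symm, Or.inr hprec⟩,
      hne, hprec⟩
  obtain ⟨B₀, hB₀⟩ : ∃ B, Racing ρ B := by
    obtain ⟨B, B', h1, h2, hne, hrc⟩ := hr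
    exact ⟨B, h1, B', h2, (blocks_ne_lists h1 h2 hne).symm, hrc⟩
  let g : ℕ → {B : List (Fin n) × Fate // Racing ρ B} := fun i =>
    Nat.rec ⟨B₀, hB₀⟩ (fun _ p => ⟨(hstep p.1 p.2).choose, (hstep p.1 p.2).choose_spec.1⟩) i
  have hgsucc : ∀ i, Prec ρ (g i).1 (g (i+1)).1 ∧ (g (i+1)).1.1 ≠ (g i).1.1 := by
    intro i
    exact ⟨(hstep (g i).1 (g i).2).choose_spec.2.2, (hstep (g i).1 (g i).2).choose_spec.2.1⟩
  have hfin : Finite {B : List (Fin n) × Fate // Racing ρ B} := by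
    have h1 : {B : List (Fin n) × Fate | Racing ρ B}.Finite :=
      (blocks_finite ρ).subset (fun B h => h.1)
    exact h1.to_subtype
  obtain ⟨i, j, hij, hgij⟩ := Finite.exists_ne_map_eq_of_infinite g
  wlog hij' : i < j generalizing i j
  · exact this j i hij.symm hgij.symm (by omega)
  apply hnc
  refine ⟨j - i, fun p => (g (i + p.val)).1, by omega, fun p => (g (i + p.val)).2.1, ?_, ?_⟩
  · have h1 : i + (j - i) = j := by omega
    simp only [Fin.val_last, Fin.val_zero, h1, Nat.add_zero]
    exact congrArg Subtype.val hgij.symm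
  · intro p
    simp only [Fin.coe_castSucc, Fin.val_succ]
    exact (hgsucc (i + p.val)).1

end Aux4

section Aux5

variable {X I Q : Type} [DecidableEq X] {A : AT X I Q} {n : ℕ}

/-- Position `j` carries an action belonging to `S`. -/
def inS (S : Set (Fin n)) (j : Fin (n+1)) : Prop :=
  ∃ k : Fin n, (k : ℕ) = (j : ℕ) ∧ k ∈ S

/-- The action preceding position `j` belongs to `S`. -/
def prevS (S : Set (Fin n)) (j : Fin (n+1)) : Prop :=
  ∃ k : Fin n, (k : ℕ) + 1 = (j : ℕ) ∧ k ∈ S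

lemma inS_castSucc (S : Set (Fin n)) (k : Fin n) : inS S (k.castSucc) ↔ k ∈ S := by
  constructor
  · rintro ⟨k', hk', hk'S⟩
    rwa [show k' = k from Fin.ext (by simpa using hk')] at hk'S
  · intro h; exact ⟨k, by simp, h⟩

lemma inS_iff (S : Set (Fin n)) (j : Fin (n+1)) (h : (j : ℕ) < n) :
    inS S j ↔ (⟨(j : ℕ), h⟩ : Fin n) ∈ S := by
  constructor
  · rintro ⟨k', hk', hk'S⟩
    rwa [show k' = ⟨(j : ℕ), h⟩ from Fin.ext (by simpa using hk')] at hk'S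
  · intro hm; exact ⟨⟨(j : ℕ), h⟩, rfl, hm⟩

lemma not_inS_last (S : Set (Fin n)) : ¬ inS S (Fin.last n) := by
  rintro ⟨k, hk, -⟩
  have := k.isLt
  simp only [Fin.val_last] at hk
  omega

lemma prevS_succ (S : Set (Fin n)) (k : Fin n) : prevS S k.succ ↔ k ∈ S := by
  constructor
  · rintro ⟨k', hk', hk'S⟩
    rwa [show k' = k from Fin.ext (by simp only [Fin.val_succ] at hk'; omega)] at hk'S
  · intro h; exact ⟨k, by simp, h⟩

lemma not_prevS_zero (S : Set (Fin n)) : ¬ prevS S 0 := by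
  rintro ⟨k, hk, -⟩
  simp at hk

open Classical in
lemma wiggledDelay_eq (ρ : TimedRun A n) (S : Set (Fin n)) (ε : ℝ) (j : Fin (n+1)) :
    wiggledDelay ρ S ε j
      = ρ.delays j + (if inS S j then ε else 0) - (if prevS S j then ε else 0) := by
  unfold wiggledDelay
  have hP1 : (∃ k : Fin n, k.castSucc = j ∧ k ∈ S ∧ ∀ k' : Fin n, k'.succ = j → k' ∉ S)
      ↔ (inS S j ∧ ¬ prevS S j) := by
    constructor
    · rintro ⟨k, hk1, hk2, hk3⟩
      refine ⟨⟨k, by rw [← hk1]; rfl, hk2⟩, ?_⟩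
      rintro ⟨k', hk1', hk2'⟩
      exact hk3 k' (Fin.ext (by simp only [Fin.val_succ]; omega)) hk2'
    · rintro ⟨⟨k, hk1, hk2⟩, hnp⟩
      refine ⟨k, Fin.ext (by simpa using hk1), hk2, ?_⟩
      intro k' hk' hk'S
      exact hnp ⟨k', by rw [← hk']; simp, hk'S⟩
  have hP2 : (∃ k : Fin n, k.succ = j ∧ k ∈ S ∧ ∀ k' : Fin n, k'.castSucc = j → k' ∉ S)
      ↔ (prevS S j ∧ ¬ inS S j) := by
    constructor
    · rintro ⟨k, hk1, hk2, hk3⟩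
      refine ⟨⟨k, by rw [← hk1]; simp, hk2⟩, ?_⟩
      rintro ⟨k', hk1', hk2'⟩
      exact hk3 k' (Fin.ext (by simpa using hk1')) hk2'
    · rintro ⟨⟨k, hk1, hk2⟩, hnp⟩
      refine ⟨k, Fin.ext (by simp only [Fin.val_succ]; omega), hk2, ?_⟩
      intro k' hk' hk'S
      exact hnp ⟨k', by rw [← hk']; rfl, hk'S⟩
  rw [if_congr hP1 rfl rfl, if_congr hP2 rfl rfl]
  by_cases h1 : inS S j <;> by_cases h2 : prevS S j <;>
    simp [h1, h2]

lemma ptime_succ (ρ : TimedRun A n) (k : Fin n) :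
    ptime ρ k.succ = ptime ρ k.castSucc + ρ.delays k.castSucc := ptimeD_succ _ k

open Classical in
lemma ptimeD_wiggled (ρ : TimedRun A n) (S : Set (Fin n)) (ε : ℝ) (j : Fin (n+1)) :
    ptimeD (wiggledDelay ρ S ε) j = ptime ρ j + (if prevS S j then ε else 0) := by
  induction j using Fin.induction with
  | zero =>
    rw [if_neg (not_prevS_zero S)]
    have h0 : Finset.Iio (0 : Fin (n+1)) = ∅ := by
      ext p; simp [Finset.mem_Iio, Fin.not_lt_zero]
    simp [ptimeD, ptime, h0]
  | succ i ih =>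
    rw [ptimeD_succ, ptime_succ, ih, wiggledDelay_eq,
      if_congr (prevS_succ S i) rfl rfl, if_congr (inS_castSucc S i) rfl rfl]
    ring

open Classical in
lemma atimeD_wiggled (ρ : TimedRun A n) (S : Set (Fin n)) (ε : ℝ) (k : Fin n) :
    atimeD (wiggledDelay ρ S ε) k = atime ρ k + (if k ∈ S then ε else 0) := by
  unfold atimeD
  rw [ptimeD_wiggled, if_congr (prevS_succ S k) rfl rfl]
  rfl

open Classical in
lemma pt_plus_d_wiggled (ρ : TimedRun A n) (S : Set (Fin n)) (ε : ℝ) (j : Fin (n+1)) :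
    ptimeD (wiggledDelay ρ S ε) j + wiggledDelay ρ S ε j
      = ptime ρ j + ρ.delays j + (if inS S j then ε else 0) := by
  rw [ptimeD_wiggled, wiggledDelay_eq]
  ring

end Aux5

section Aux6

variable {X I Q : Type} [DecidableEq X] {A : AT X I Q} {n : ℕ}

lemma mkVals_step (ρ : TimedRun A n) (d : Fin (n+1) → ℝ) (k : Fin n) (y : X) :
    mkVals ρ d ((k.succ : Fin (n+1)) : ℕ) y
      = (ρ.upds k).elim (mkVals ρ d (k.castSucc : Fin (n+1)).val y - d k.castSucc)
          (fun p => if y = p.1 then ((p.2 : ℕ) : ℝ)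
            else mkVals ρ d (k.castSucc : Fin (n+1)).val y - d k.castSucc) := by
  show mkVals ρ d (k.val + 1) y = _
  simp only [mkVals, dif_pos k.isLt]
  have h1 : (⟨k.val, k.isLt⟩ : Fin n) = k := Fin.eta k k.isLt
  have h2 : (⟨k.val, Nat.lt_succ_of_lt k.isLt⟩ : Fin (n+1)) = k.castSucc := rfl
  rw [h1, h2]
  rfl

lemma no_timeout_between {ρ : TimedRun A n} {k' ℓ : Fin n} {x : X} {c : ℕ+}
    (hu : ρ.upds k' = some (x, c)) (hnos : ∀ b, ¬ Triggers ρ k' b) (hlt : k' < ℓ)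
    (hnd : ∀ m, k' < m → m < ℓ → ¬ Discards ρ m x) :
    ∀ m, k' < m → m < ℓ → ρ.acts m ≠ Act.timeout x := by
  classical
  intro m hm1 hm2 ha
  set T : Finset (Fin n) :=
    Finset.univ.filter (fun m' => k' < m' ∧ m' < ℓ ∧ ρ.acts m' = Act.timeout x) with hT
  have hTne : T.Nonempty := ⟨m, by simp [hT]; exact ⟨hm1, hm2, ha⟩⟩
  set m₀ := T.min' hTne with hm₀
  have hm₀mem := T.min'_mem hTne
  simp only [hT, Finset.mem_filter, Finset.mem_univ, true_and] at hm₀mem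
  apply hnos m₀
  refine ⟨hm₀mem.1, x, c, hu, hm₀mem.2.2, ?_⟩
  intro ℓ' h1 h2
  constructor
  · intro ha'
    have : m₀ ≤ ℓ' := T.min'_le ℓ' (by
      simp only [hT, Finset.mem_filter, Finset.mem_univ, true_and]
      exact ⟨h1, lt_trans h2 hm₀mem.2.1, ha'⟩)
    exact absurd h2 (not_lt.mpr this)
  · exact hnd ℓ' h1 (lt_trans h2 hm₀mem.2.1)

lemma first_discard_unique {ρ : TimedRun A n} {k' ℓ ℓ' : Fin n} {x : X}
    (h1 : k' < ℓ) (h2 : Discards ρ ℓ x) (h3 : ∀ m, k' < m → m < ℓ → ¬ Discards ρ m x)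
    (h1' : k' < ℓ') (h2' : Discards ρ ℓ' x)
    (h3' : ∀ m, k' < m → m < ℓ' → ¬ Discards ρ m x) : ℓ = ℓ' := by
  rcases lt_trichotomy ℓ ℓ' with h | h | h
  · exact absurd h2 (h3' ℓ h1 h)
  · exact h
  · exact absurd h2' (h3 ℓ' h1' h)

lemma fate_disc0_D {ρ : TimedRun A n} {l : List (Fin n)} {γ : Fate} {k' : Fin n} {x : X}
    {c : ℕ+} (hb : IsBlock ρ l γ) (hγ : γ = Fate.disc0) (hlast : l.getLast? = some k')
    (hu : ρ.upds k' = some (x, c)) : DiscardedAtZeroAfter ρ k' x := by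
  by_contra hnD
  have h := (hb.2.2.2.2 k' hlast).2 x c hu
  rw [h.2 hnD] at hγ
  cases hγ

lemma discard_value (σ : TimedRun A n) {k' ℓ : Fin n} {x : X} {c : ℕ+}
    (hu : σ.upds k' = some (x, c)) (hnos : ∀ b, ¬ Triggers σ k' b)
    (h1 : k' < ℓ) (h3 : ∀ m, k' < m → m < ℓ → ¬ Discards σ m x) :
    x ∈ A.χ (σ.states ℓ.castSucc) ∧
      σ.vals ℓ.castSucc x - σ.delays ℓ.castSucc
        = ((c : ℕ) : ℝ) + atime σ k' - atime σ ℓ := by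
  have hnto := no_timeout_between hu hnos h1 h3
  have hwin : ∀ m, k' < m → (m : ℕ) < ((ℓ.castSucc : Fin (n+1)) : ℕ) →
      σ.acts m ≠ Act.timeout x ∧ ¬ Discards σ m x := by
    intro m hm1 hm2
    have hm2' : m < ℓ := Fin.lt_def.mpr (by simpa using hm2)
    exact ⟨hnto m hm1 hm2', h3 m hm1 hm2'⟩
  have hev := evol σ hu ℓ.castSucc (by simpa using Fin.lt_def.mp h1) hwin
  refine ⟨hev.1, ?_⟩
  rw [hev.2, atime_eq σ ℓ]
  ring

lemma discard_value_nonneg (σ : TimedRun A n) {k' ℓ : Fin n} {x : X} {c : ℕ+}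
    (hu : σ.upds k' = some (x, c)) (hnos : ∀ b, ¬ Triggers σ k' b)
    (h1 : k' < ℓ) (h3 : ∀ m, k' < m → m < ℓ → ¬ Discards σ m x) :
    0 ≤ ((c : ℕ) : ℝ) + atime σ k' - atime σ ℓ := by
  obtain ⟨hx, hv⟩ := discard_value σ hu hnos h1 h3
  have := σ.delays_le ℓ.castSucc x hx
  linarith

/-- The value `c` started by the update of action `k` (or 0). -/
def cval (ρ : TimedRun A n) (k : Fin n) : ℕ :=
  (ρ.upds k).elim 0 (fun p => (p.2 : ℕ))

lemma cval_eq {ρ : TimedRun A n} {k : Fin n} {x : X} {c : ℕ+}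
    (hu : ρ.upds k = some (x, c)) : cval ρ k = (c : ℕ) := by
  unfold cval
  rw [hu]
  simp

end Aux6

section Aux7

variable {X I Q : Type} [DecidableEq X] {A : AT X I Q} {n : ℕ}

open Classical in
lemma wiggle_sink_step (ρ : TimedRun A n) (hpad : Padded ρ) (B : List (Fin n) × Fate)
    (hB : Racing ρ B)
    (hsink : ∀ l γ', IsBlock ρ l γ' → l ≠ B.1 → ¬ Prec ρ B (l, γ')) :
    ∃ ρ' : TimedRun A n, WiggleStep ρ ρ' ∧ Padded ρ' ∧
      RacePairs ρ' ⊆ RacePairs ρ ∧ ∀ q ∈ RacePairs ρ', q.1 ≠ B.1 ∧ q.2 ≠ B.1 := by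
  classical
  obtain ⟨ks, γ⟩ := B
  have hks : IsBlock ρ ks γ := hB.1
  -- sink-derived facts
  have hnotin_block : ∀ m : Fin n, m ∉ ks → blockOf ρ m ≠ ks :=
    fun m hm h => hm (h ▸ mem_blockOf_self ρ m)
  have hgapB : ∀ k ∈ ks, ∀ k' : Fin n, k' ∉ ks → k < k' →
      atime ρ k' - atime ρ k ≠ 0 := by
    intro k hk k' hk' hlt h0
    apply hsink (blockOf ρ k') (fateOf ρ (blockOf ρ k')) (isBlock_blockOf ρ k')
      (hnotin_block k' hk')
    left
    exact ⟨k, hk, k', mem_blockOf_self ρ k', hlt,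
      by rw [delayBetween_eq ρ (le_of_lt hlt)]; linarith⟩
  have hgapB' : ∀ k ∈ ks, ∀ k' : Fin n, k' ∉ ks → k < k' →
      0 < atime ρ k' - atime ρ k := by
    intro k hk k' hk' hlt
    have h0 := hgapB k hk k' hk' hlt
    have hnn : 0 ≤ atime ρ k' - atime ρ k := by
      have := delayBetween_nonneg ρ k k'
      rw [delayBetween_eq ρ (le_of_lt hlt)] at this
      linarith
    exact lt_of_le_of_ne hnn (Ne.symm h0)
  -- KEY: no zero slack for a timer started outside the block constraining an action inside it
  have hslack : ∀ jA : Fin n, jA ∈ ks → ∀ k : Fin n, k ∉ ks → ∀ (x : X) (c : ℕ+),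
      ρ.upds k = some (x, c) → (k : ℕ) < (jA : ℕ) →
      (∀ m : Fin n, k < m → (m : ℕ) < (jA : ℕ) →
        ρ.acts m ≠ Act.timeout x ∧ ¬ Discards ρ m x) →
      atime ρ k + ((c : ℕ) : ℝ) ≠ atime ρ jA := by
    intro jA hjA k hk x c hu hkj hwin heq
    set T : Finset (Fin n) := Finset.univ.filter
      (fun m => k < m ∧ (Discards ρ m x ∨ ρ.acts m = Act.timeout x)) with hT
    by_cases hTne : T.Nonempty
    · set w := T.min' hTne with hw
      have hwmem := Finset.mem_filter.mp (T.min'_mem hTne)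
      obtain ⟨hwk, hwdt⟩ := hwmem.2
      have hwmin : ∀ m, k < m → (Discards ρ m x ∨ ρ.acts m = Act.timeout x) → w ≤ m := by
        intro m h1 h2
        exact T.min'_le m (Finset.mem_filter.mpr ⟨Finset.mem_univ _, h1, h2⟩)
      have hwclean : ∀ m, k < m → m < w → ρ.acts m ≠ Act.timeout x ∧ ¬ Discards ρ m x := by
        intro m h1 h2
        constructor
        · intro ha
          exact absurd h2 (not_lt.mpr (hwmin m h1 (Or.inr ha)))
        · intro hd
          exact absurd h2 (not_lt.mpr (hwmin m h1 (Or.inl hd)))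
      rcases hwdt with hdisc | hto
      · -- first interference is a discard
        have hfd : ∀ m, k < m → m < w → ¬ Discards ρ m x := fun m h1 h2 => (hwclean m h1 h2).2
        have hev := evol ρ hu w.castSucc (by rw [Fin.coe_castSucc]; exact Fin.lt_def.mp hwk)
          (fun m h1 h2 => hwclean m h1 (Fin.lt_def.mpr (by simpa using h2)))
        have hle := ρ.delays_le w.castSucc x hev.1
        have hjw : (jA : ℕ) ≤ (w : ℕ) := by
          by_contra h
          push_neg at h
          exact (hwin w hwk h).2 hdisc
        have hvw : ρ.vals w.castSucc x - ρ.delays w.castSucc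
            = ((c : ℕ) : ℝ) + atime ρ k - atime ρ w := by
          rw [hev.2, atime_eq ρ w]; ring
        have hmono : atime ρ jA ≤ atime ρ w := atime_mono ρ (Fin.le_def.mpr hjw)
        have hzero : ρ.vals w.castSucc x - ρ.delays w.castSucc = 0 := by
          have h2' : ρ.vals w.castSucc x - ρ.delays w.castSucc ≤ 0 := by
            rw [hvw]; linarith
          linarith
        have hD : DiscardedAtZeroAfter ρ k x := ⟨w, hwk, hdisc, hfd, hzero⟩
        have hnos : ∀ b, ¬ Triggers ρ k b := by
          rintro b ⟨hb1, x', c', hu', hb2, hbw⟩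
          rw [hu] at hu'
          simp only [Option.some.injEq, Prod.mk.injEq] at hu'
          obtain ⟨rfl, rfl⟩ := hu'
          have hwb : w ≤ b := hwmin b hb1 (Or.inr hb2)
          have hwnb : w ≠ b := fun h => hdisc.2.1 (by rw [show T.min' hTne = b from h]; exact hb2)
          exact (hbw w hwk (lt_of_le_of_ne hwb hwnb)).2 hdisc
        have hlast : (blockOf ρ k).getLast? = some k :=
          block_getLast_of_no_succ (isBlock_blockOf ρ k) (mem_blockOf_self ρ k) hnos
        have hfate : fateOf ρ (blockOf ρ k) = Fate.disc0 :=
          ((fateOf_spec ρ (blockOf ρ k) k hlast).2 x c hu).1 hD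
        have hbk_ne : blockOf ρ k ≠ ks := hnotin_block k hk
        by_cases hwS : w ∈ ks
        · exact hsink (blockOf ρ k) (fateOf ρ (blockOf ρ k)) (isBlock_blockOf ρ k) hbk_ne
            (Or.inr ⟨hfate, k, x, c, hlast, hu, w, hwS, hwk, hdisc, hfd⟩)
        · have hjaw : jA < w :=
            lt_of_le_of_ne (Fin.le_def.mpr hjw) (fun h => hwS (h ▸ hjA))
          apply hsink (blockOf ρ w) (fateOf ρ (blockOf ρ w)) (isBlock_blockOf ρ w)
            (hnotin_block w hwS)
          left
          refine ⟨jA, hjA, w, mem_blockOf_self ρ w, hjaw, ?_⟩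
          rw [delayBetween_eq ρ (le_of_lt hjaw)]
          have : ρ.vals w.castSucc x - ρ.delays w.castSucc
              = ((c : ℕ) : ℝ) + atime ρ k - atime ρ w := hvw
          rw [hzero] at this
          linarith
      · -- first interference is the timeout of x
        have htrig : Triggers ρ k w := ⟨hwk, x, c, hu, hto, fun ℓ h1 h2 => hwclean ℓ h1 h2⟩
        have hjw : (jA : ℕ) ≤ (w : ℕ) := by
          by_contra h
          push_neg at h
          exact (hwin w hwk h).1 hto
        have hwblock : w ∈ blockOf ρ k :=
          chainFrom_closed ρ htrig (n - (rootOf ρ k).val) (rootOf ρ k) le_rfl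
            (mem_blockOf_self ρ k)
        have hwks : w ∉ ks := by
          intro hwks
          have heqb := block_eq_of_mem hks (isBlock_blockOf ρ k) hwks hwblock
          exact hk (by rw [heqb]; exact mem_blockOf_self ρ k)
        have hjaw : jA < w := lt_of_le_of_ne (Fin.le_def.mpr hjw) (fun h => hwks (h ▸ hjA))
        have hat := trig_atime ρ htrig hu
        apply hsink (blockOf ρ w) (fateOf ρ (blockOf ρ w)) (isBlock_blockOf ρ w)
          (hnotin_block w hwks)
        left
        refine ⟨jA, hjA, w, mem_blockOf_self ρ w, hjaw, ?_⟩
        rw [delayBetween_eq ρ (le_of_lt hjaw)]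
        linarith
    · -- x stays active to the end of the run: contradiction with paddedness
      have hwall : ∀ m : Fin n, k < m → (m : ℕ) < ((Fin.last n : Fin (n+1)) : ℕ) →
          ρ.acts m ≠ Act.timeout x ∧ ¬ Discards ρ m x := by
        intro m hm _
        constructor
        · intro ha
          exact hTne ⟨m, Finset.mem_filter.mpr ⟨Finset.mem_univ _, hm, Or.inr ha⟩⟩
        · intro hd
          exact hTne ⟨m, Finset.mem_filter.mpr ⟨Finset.mem_univ _, hm, Or.inl hd⟩⟩
      have hev := evol ρ hu (Fin.last n) (by simpa using k.isLt) hwall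
      have h3 := hpad.2.2 x hev.1
      have hle := ρ.delays_le (Fin.last n) x hev.1
      rw [hev.2] at h3 hle
      have hja : atime ρ jA ≤ ptime ρ (Fin.last n) + ρ.delays (Fin.last n) := by
        have := atime_le_ttime ρ jA
        unfold ttime at this
        linarith
      exact h3 (by linarith)
  -- the finite set of positive quantities that must dominate ε
  set Fs : Finset ℝ :=
    (((Finset.univ : Finset (Fin (n+1))).image ρ.delays ∪
      (Finset.univ : Finset (Fin n × Fin n)).image (fun p => atime ρ p.2 - atime ρ p.1)) ∪
      (Finset.univ : Finset (Fin n × Fin (n+1))).image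
        (fun p => (cval ρ p.1 : ℝ) + atime ρ p.1 - ptime ρ p.2 - ρ.delays p.2)).filter
      (fun r => 0 < r) with hFs
  have hFne : Fs.Nonempty := by
    refine ⟨ρ.delays (Fin.last n), ?_⟩
    rw [hFs]
    exact Finset.mem_filter.mpr ⟨Finset.mem_union_left _ (Finset.mem_union_left _
      (Finset.mem_image.mpr ⟨Fin.last n, Finset.mem_univ _, rfl⟩)), hpad.2.1⟩
  set ε := Fs.min' hFne / 2 with hε
  have hmin_pos : 0 < Fs.min' hFne :=
    (Finset.mem_filter.mp (Fs.min'_mem hFne)).2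
  have hεpos : 0 < ε := by rw [hε]; linarith
  have hεlt : ∀ r ∈ Fs, ε < r := by
    intro r hr
    have := Fs.min'_le r hr
    rw [hε]; linarith
  have hεd : ∀ j, 0 < ρ.delays j → ε < ρ.delays j := by
    intro j hj
    exact hεlt _ (by rw [hFs]; exact Finset.mem_filter.mpr ⟨Finset.mem_union_left _
      (Finset.mem_union_left _ (Finset.mem_image.mpr ⟨j, Finset.mem_univ _, rfl⟩)), hj⟩)
  have hεa : ∀ k k' : Fin n, 0 < atime ρ k' - atime ρ k → ε < atime ρ k' - atime ρ k := by
    intro k k' h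
    exact hεlt _ (by rw [hFs]; exact Finset.mem_filter.mpr ⟨Finset.mem_union_left _
      (Finset.mem_union_right _ (Finset.mem_image.mpr ⟨(k, k'), Finset.mem_univ _, rfl⟩)), h⟩)
  have hεs : ∀ (k : Fin n) (j : Fin (n+1)) (x : X) (c : ℕ+), ρ.upds k = some (x, c) →
      0 < ((c : ℕ) : ℝ) + atime ρ k - ptime ρ j - ρ.delays j →
      ε < ((c : ℕ) : ℝ) + atime ρ k - ptime ρ j - ρ.delays j := by
    intro k j x c hu h
    have hc : (cval ρ k : ℝ) = ((c : ℕ) : ℝ) := by rw [cval_eq hu]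
    apply hεlt
    rw [hFs]
    refine Finset.mem_filter.mpr ⟨Finset.mem_union_right _
      (Finset.mem_image.mpr ⟨(k, j), Finset.mem_univ _, ?_⟩), h⟩
    rw [hc]

  -- obligations for the wiggled run
  have hO1 : ∀ j, 0 ≤ wiggledDelay ρ {k | k ∈ ks} ε j := by
    intro j
    rw [wiggledDelay_eq]
    by_cases h1 : inS {k | k ∈ ks} j <;> by_cases h2 : prevS {k | k ∈ ks} j
    · rw [if_pos h1, if_pos h2]
      have := ρ.delays_nonneg j
      linarith
    · rw [if_pos h1, if_neg h2]
      have := ρ.delays_nonneg j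
      linarith
    · rw [if_neg h1, if_pos h2]
      obtain ⟨k, hk1, hk2⟩ := h2
      have hdpos : 0 < ρ.delays j := by
        by_cases hjn : (j : ℕ) < n
        · have hk2' : k ∈ ks := hk2
          have hk''ns : (⟨(j : ℕ), hjn⟩ : Fin n) ∉ ks := fun h => h1 ((inS_iff _ j hjn).mpr h)
          have hlt : k < (⟨(j : ℕ), hjn⟩ : Fin n) := Fin.lt_def.mpr (by simp; omega)
          have hsj : (k.succ : Fin (n+1)) = j := Fin.ext (by simp only [Fin.val_succ]; omega)
          have hcs : ((⟨(j : ℕ), hjn⟩ : Fin n).castSucc : Fin (n+1)) = j := Fin.ext rfl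
          have hgap : atime ρ (⟨(j : ℕ), hjn⟩ : Fin n) - atime ρ k = ρ.delays j := by
            rw [atime_eq ρ _, hcs, atime_def ρ k, hsj]
            ring
          have := hgapB' k hk2' _ hk''ns hlt
          linarith
        · have hj : j = Fin.last n := Fin.ext (by have := j.isLt; simp only [Fin.val_last]; omega)
          rw [hj]; exact hpad.2.1
      have := hεd j hdpos
      linarith
    · rw [if_neg h1, if_neg h2]
      have := ρ.delays_nonneg j
      linarith
  have hO2 : ∀ (j : Fin (n+1)), ∀ x ∈ A.χ (ρ.states j),
      wiggledDelay ρ {k | k ∈ ks} ε j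
        ≤ mkVals ρ (wiggledDelay ρ {k | k ∈ ks} ε) (j : ℕ) x := by
    intro j x hx
    obtain ⟨k, hk1, ⟨c, hc⟩, hk3⟩ := active_start ρ j x hx
    have hev' := mkVals_evol ρ (wiggledDelay ρ {k | k ∈ ks} ε) hc j hk1 hk3
    have hev := evol ρ hc j hk1 hk3
    have hbase : ρ.delays j ≤ ((c : ℕ) : ℝ) - (ptime ρ j - atime ρ k) := by
      rw [← hev.2]
      exact ρ.delays_le j x hx
    rw [hev'.2]
    have hpd := pt_plus_d_wiggled ρ {k | k ∈ ks} ε j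
    have hak := atimeD_wiggled ρ {k | k ∈ ks} ε k
    unfold atimeD at hak
    by_cases hjS : inS {k | k ∈ ks} j <;> by_cases hkS : k ∈ {k | k ∈ ks}
    · rw [if_pos hjS] at hpd
      rw [if_pos hkS] at hak
      linarith
    · rw [if_pos hjS] at hpd
      rw [if_neg hkS] at hak
      have hjn : (j : ℕ) < n := by
        by_contra h
        have hj : j = Fin.last n := Fin.ext (by have := j.isLt; simp only [Fin.val_last]; omega)
        exact not_inS_last _ (hj ▸ hjS)
      have hjA : (⟨(j : ℕ), hjn⟩ : Fin n) ∈ ks := (inS_iff _ j hjn).mp hjS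
      have hja_at : ptime ρ j + ρ.delays j = atime ρ (⟨(j : ℕ), hjn⟩ : Fin n) := by
        rw [atime_eq ρ _,
          show ((⟨(j : ℕ), hjn⟩ : Fin n).castSucc : Fin (n+1)) = j from Fin.ext rfl]
      have hne0 := hslack ⟨(j : ℕ), hjn⟩ hjA k hkS x c hc hk1 hk3
      have hpos : 0 < ((c : ℕ) : ℝ) + atime ρ k - ptime ρ j - ρ.delays j := by
        rcases lt_or_eq_of_le (by linarith :
            (0:ℝ) ≤ ((c : ℕ) : ℝ) + atime ρ k - ptime ρ j - ρ.delays j) with h | h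
        · exact h
        · exact absurd (by linarith [hja_at] :
            atime ρ k + ((c : ℕ) : ℝ) = atime ρ (⟨(j : ℕ), hjn⟩ : Fin n)) hne0
      have := hεs k j x c hc hpos
      linarith
    · rw [if_neg hjS] at hpd
      rw [if_pos hkS] at hak
      linarith [hεpos]
    · rw [if_neg hjS] at hpd
      rw [if_neg hkS] at hak
      linarith
  have hO3 : ∀ (k : Fin n) (x : X), ρ.acts k = Act.timeout x →
      mkVals ρ (wiggledDelay ρ {k | k ∈ ks} ε) ((k.castSucc : Fin (n+1)) : ℕ) x
        - wiggledDelay ρ {k | k ∈ ks} ε k.castSucc = 0 := by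
    intro k x ha
    obtain ⟨k₀, htrig, c, hu⟩ := timeout_triggered ρ ha
    have hSiff : k₀ ∈ ks ↔ k ∈ ks :=
      ⟨fun h => block_closed_succ hks h htrig, fun h => block_closed_pred hks h htrig⟩
    obtain ⟨hlt₀, x', c', hu', ha', hw₀⟩ := htrig
    rw [hu] at hu'
    simp only [Option.some.injEq, Prod.mk.injEq] at hu'
    obtain ⟨rfl, rfl⟩ := hu'
    have hwin : ∀ m : Fin n, k₀ < m → (m : ℕ) < ((k.castSucc : Fin (n+1)) : ℕ) →
        ρ.acts m ≠ Act.timeout x ∧ ¬ Discards ρ m x := by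
      intro m h1 h2
      exact hw₀ m h1 (Fin.lt_def.mpr (by rwa [Fin.coe_castSucc] at h2))
    have hev' := mkVals_evol ρ (wiggledDelay ρ {k | k ∈ ks} ε) hu k.castSucc
      (by rw [Fin.coe_castSucc]; exact Fin.lt_def.mp hlt₀) hwin
    have hev := evol ρ hu k.castSucc
      (by rw [Fin.coe_castSucc]; exact Fin.lt_def.mp hlt₀) hwin
    have htz := ρ.timeout_zero k x ha
    rw [hev.2] at htz
    rw [hev'.2]
    have hpd := pt_plus_d_wiggled ρ {k | k ∈ ks} ε k.castSucc
    rw [if_congr (inS_castSucc _ k) rfl rfl] at hpd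
    have hak := atimeD_wiggled ρ {k | k ∈ ks} ε k₀
    unfold atimeD at hak
    by_cases hkS : k ∈ ks
    · rw [if_pos (show k ∈ {k | k ∈ ks} from hkS)] at hpd
      rw [if_pos (show k₀ ∈ {k | k ∈ ks} from hSiff.mpr hkS)] at hak
      linarith
    · rw [if_neg (show ¬ (k ∈ {k | k ∈ ks}) from hkS)] at hpd
      rw [if_neg (show ¬ (k₀ ∈ {k | k ∈ ks}) from fun h => hkS (hSiff.mp h))] at hak
      linarith
  have hO4first : 0 < wiggledDelay ρ {k | k ∈ ks} ε 0 := by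
    rw [wiggledDelay_eq, if_neg (not_prevS_zero _)]
    by_cases h : inS {k | k ∈ ks} 0
    · rw [if_pos h]; linarith [hpad.1]
    · rw [if_neg h]; linarith [hpad.1]
  have hO4last : 0 < wiggledDelay ρ {k | k ∈ ks} ε (Fin.last n) := by
    rw [wiggledDelay_eq, if_neg (not_inS_last _)]
    by_cases h : prevS {k | k ∈ ks} (Fin.last n)
    · rw [if_pos h]
      have := hεd _ hpad.2.1
      linarith
    · rw [if_neg h]; linarith [hpad.2.1]
  have hO4third : ∀ x ∈ A.χ (ρ.states (Fin.last n)),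
      mkVals ρ (wiggledDelay ρ {k | k ∈ ks} ε) ((Fin.last n : Fin (n+1)) : ℕ) x
        - wiggledDelay ρ {k | k ∈ ks} ε (Fin.last n) ≠ 0 := by
    intro x hx
    obtain ⟨k, hk1, ⟨c, hc⟩, hk3⟩ := active_start ρ (Fin.last n) x hx
    have hev' := mkVals_evol ρ (wiggledDelay ρ {k | k ∈ ks} ε) hc _ hk1 hk3
    have hev := evol ρ hc _ hk1 hk3
    have h3 := hpad.2.2 x hx
    have hle := ρ.delays_le (Fin.last n) x hx
    rw [hev.2] at h3 hle
    rw [hev'.2]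
    have hpd := pt_plus_d_wiggled ρ {k | k ∈ ks} ε (Fin.last n)
    rw [if_neg (not_inS_last _)] at hpd
    have hak := atimeD_wiggled ρ {k | k ∈ ks} ε k
    unfold atimeD at hak
    have hold : 0 < ((c : ℕ) : ℝ) - (ptime ρ (Fin.last n) - atime ρ k)
        - ρ.delays (Fin.last n) :=
      lt_of_le_of_ne (by linarith) (fun h => h3 (by linarith))
    by_cases hkS : k ∈ {k | k ∈ ks}
    · rw [if_pos hkS] at hak
      intro h0
      linarith
    · rw [if_neg hkS] at hak
      intro h0
      linarith
  -- the wiggled run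
  let ρ' : TimedRun A n :=
    { states := ρ.states
      vals := fun j y => mkVals ρ (wiggledDelay ρ {k | k ∈ ks} ε) (j : ℕ) y
      delays := wiggledDelay ρ {k | k ∈ ks} ε
      acts := ρ.acts
      upds := ρ.upds
      init_state := ρ.init_state
      init_val := fun y => rfl
      delays_nonneg := hO1
      delays_le := hO2
      trans := ρ.trans
      timeout_zero := hO3
      val_step := fun k y => mkVals_step ρ (wiggledDelay ρ {k | k ∈ ks} ε) k y }
  have hpad' : Padded ρ' := ⟨hO4first, hO4last, hO4third⟩
  have hst : ρ'.states = ρ.states := rfl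
  have hac : ρ'.acts = ρ.acts := rfl
  have hup : ρ'.upds = ρ.upds := rfl
  have hdc_eq : Discards ρ' = Discards ρ := discards_congr hst hac hup
  have hat1 : ∀ k : Fin n, atime ρ' k = atimeD (wiggledDelay ρ {k | k ∈ ks} ε) k :=
    fun _ => rfl
  have hat2 := fun k : Fin n => atimeD_wiggled ρ {k | k ∈ ks} ε k
  -- the shifted block races with no other block in the new run
  have hO6 : ∀ (γ₁ : Fate) (ks₂ : List (Fin n)) (γ₂ : Fate),
      IsBlock ρ' ks γ₁ → IsBlock ρ' ks₂ γ₂ → (ks, γ₁) ≠ (ks₂, γ₂) →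
      ¬ BlocksRace ρ' (ks, γ₁) (ks₂, γ₂) := by
    intro γ₁ ks₂ γ₂ hb1' hb2' hne hrace
    have hb2 : IsBlock ρ ks₂ (fateOf ρ ks₂) :=
      isBlock_transfer (ρ := ρ') (ρ' := ρ) rfl rfl rfl hb2'
    have hks2ne : ks₂ ≠ ks := by
      intro h
      subst h
      exact hne (Prod.ext rfl (fate_unique hb1'.1 hb1'.2.2.2.2 hb2'.2.2.2.2))
    have hdisj2 : ∀ m ∈ ks₂, m ∉ ks := fun m hm hmk =>
      hks2ne (block_eq_of_mem hb2 hks hm hmk)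
    rcases hrace with hpr | hpr
    · rcases hpr with ⟨k, hk, k', hk', hlt, hz⟩ |
        ⟨hγ2, k', x, c, hlast, hu, ℓ, hℓ, hlt, hdisc, hmin⟩
      · rw [delayBetween_eq ρ' (le_of_lt hlt), hat1 k, hat1 k', hat2 k, hat2 k',
          if_pos (show k ∈ {k | k ∈ ks} from hk),
          if_neg (show ¬ (k' ∈ {k | k ∈ ks}) from hdisj2 k' hk')] at hz
        have hpos := hgapB' k hk k' (hdisj2 k' hk') hlt
        have := hεa k k' hpos
        linarith
      · have hk'mem : k' ∈ ks₂ := mem_of_getLast?' _ _ hlast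
        have hk'ns : k' ∉ ks := hdisj2 k' hk'mem
        obtain ⟨ℓ₀, g1, g2, g3, g4⟩ := fate_disc0_D hb2' hγ2 hlast hu
        have g2' : Discards ρ ℓ₀ x := by rw [← hdc_eq]; exact g2
        have g3' : ∀ m, k' < m → m < ℓ₀ → ¬ Discards ρ m x :=
          fun m h1 h2 hd => g3 m h1 h2 (by rw [hdc_eq]; exact hd)
        have hdisc2 : Discards ρ ℓ x := by rw [← hdc_eq]; exact hdisc
        have hmin2 : ∀ m, k' < m → m < ℓ → ¬ Discards ρ m x :=
          fun m h1 h2 hd => hmin m h1 h2 (by rw [hdc_eq]; exact hd)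
        have hll : ℓ₀ = ℓ := first_discard_unique g1 g2' g3' hlt hdisc2 hmin2
        subst hll
        have hnos' : ∀ b, ¬ Triggers ρ' k' b := fun b => hb2'.2.2.2.1 k' b hlast
        have hnos : ∀ b, ¬ Triggers ρ k' b := fun b => hb2.2.2.2.1 k' b hlast
        have hu2 : ρ.upds k' = some (x, c) := hu
        have hv' := (discard_value ρ' hu hnos' g1 g3).2
        rw [hv'] at g4
        rw [hat1 k', hat1 ℓ₀, hat2 k', hat2 ℓ₀, if_neg (show ¬ (k' ∈ {k | k ∈ ks}) from hk'ns),
          if_pos (show ℓ₀ ∈ {k | k ∈ ks} from hℓ)] at g4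
        have hv := (discard_value ρ hu2 hnos g1 g3').2
        have hold_nonneg := discard_value_nonneg ρ hu2 hnos g1 g3'
        have hold_ne : ((c : ℕ) : ℝ) + atime ρ k' - atime ρ ℓ₀ ≠ 0 := by
          intro h0
          have hDρ : DiscardedAtZeroAfter ρ k' x :=
            ⟨ℓ₀, g1, g2', g3', by rw [hv]; linarith⟩
          have hfb : fateOf ρ ks₂ = Fate.disc0 :=
            ((fateOf_spec ρ ks₂ k' hlast).2 x c hu2).1 hDρ
          exact hsink ks₂ (fateOf ρ ks₂) hb2 hks2ne
            (Or.inr ⟨hfb, k', x, c, hlast, hu2, ℓ₀, hℓ, g1, g2', g3'⟩)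
        have hold_pos := lt_of_le_of_ne hold_nonneg (Ne.symm hold_ne)
        have hform : ((c : ℕ) : ℝ) + atime ρ k' - atime ρ ℓ₀
            = ((c : ℕ) : ℝ) + atime ρ k' - ptime ρ ℓ₀.castSucc - ρ.delays ℓ₀.castSucc := by
          rw [atime_eq ρ ℓ₀]; ring
        have hεold := hεs k' ℓ₀.castSucc x c hu2 (by rw [← hform]; exact hold_pos)
        rw [← hform] at hεold
        linarith
    · rcases hpr with ⟨k, hk, k', hk', hlt, hz⟩ |
        ⟨hγ1, k₀, x, c, hlast, hu, ℓ, hℓ, hlt, hdisc, hmin⟩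
      · rw [delayBetween_eq ρ' (le_of_lt hlt), hat1 k, hat1 k', hat2 k, hat2 k',
          if_pos (show k' ∈ {k | k ∈ ks} from hk'),
          if_neg (show ¬ (k ∈ {k | k ∈ ks}) from hdisj2 k hk)] at hz
        have hnn : 0 ≤ atime ρ k' - atime ρ k := by
          have := delayBetween_nonneg ρ k k'
          rw [delayBetween_eq ρ (le_of_lt hlt)] at this
          linarith
        linarith
      · have hk₀mem : k₀ ∈ ks := mem_of_getLast?' _ _ hlast
        obtain ⟨ℓ₀, g1, g2, g3, g4⟩ := fate_disc0_D hb1' hγ1 hlast hu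
        have hnos' : ∀ b, ¬ Triggers ρ' k₀ b := fun b => hb1'.2.2.2.1 k₀ b hlast
        have hnos : ∀ b, ¬ Triggers ρ k₀ b := fun b => hks.2.2.2.1 k₀ b hlast
        have g3' : ∀ m, k₀ < m → m < ℓ₀ → ¬ Discards ρ m x :=
          fun m h1 h2 hd => g3 m h1 h2 (by rw [hdc_eq]; exact hd)
        have hu2 : ρ.upds k₀ = some (x, c) := hu
        have hv' := (discard_value ρ' hu hnos' g1 g3).2
        rw [hv'] at g4
        have hℓ₀ns : ℓ₀ ∉ ks := by
          intro hmem
          have := mem_le_getLast _ (block_pairwise hks) hmem hlast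
          exact absurd g1 (not_lt.mpr this)
        rw [hat1 k₀, hat1 ℓ₀, hat2 k₀, hat2 ℓ₀, if_pos (show k₀ ∈ {k | k ∈ ks} from hk₀mem),
          if_neg (show ¬ (ℓ₀ ∈ {k | k ∈ ks}) from hℓ₀ns)] at g4
        have hold_nonneg := discard_value_nonneg ρ hu2 hnos g1 g3'
        linarith
  -- races in the new run were races in the old one, away from the shifted block
  have havoid : ∀ q ∈ RacePairs ρ', q.1 ≠ ks ∧ q.2 ≠ ks := by
    rintro ⟨l1, l2⟩ ⟨γ₁', γ₂', hb1', hb2', hne12, hrc⟩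
    constructor
    · intro h
      subst h
      exact hO6 γ₁' l2 γ₂' hb1' hb2' (fun h => hne12 (congrArg Prod.fst h)) hrc
    · intro h
      subst h
      apply hO6 γ₂' l1 γ₁' hb2' hb1' (fun h => hne12 (congrArg Prod.fst h).symm)
      rcases hrc with h | h
      · exact Or.inr h
      · exact Or.inl h
  have htransfer : ∀ (la lb : List (Fin n)) (γa' γb' : Fate), la ≠ ks → lb ≠ ks →
      IsBlock ρ' la γa' → IsBlock ρ' lb γb' → Prec ρ' (la, γa') (lb, γb') →
      Prec ρ (la, fateOf ρ la) (lb, fateOf ρ lb) := by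
    intro la lb γa' γb' hla hlb hba' hbb' hpr
    have hba : IsBlock ρ la (fateOf ρ la) :=
      isBlock_transfer (ρ := ρ') (ρ' := ρ) rfl rfl rfl hba'
    have hbb : IsBlock ρ lb (fateOf ρ lb) :=
      isBlock_transfer (ρ := ρ') (ρ' := ρ) rfl rfl rfl hbb'
    have hmema : ∀ m ∈ la, m ∉ ks := fun m hm hmk => hla (block_eq_of_mem hba hks hm hmk)
    have hmemb : ∀ m ∈ lb, m ∉ ks := fun m hm hmk => hlb (block_eq_of_mem hbb hks hm hmk)
    rcases hpr with ⟨k, hk, k', hk', hlt, hz⟩ |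
      ⟨hγb, k', x, c, hlast, hu, ℓ, hℓ, hlt, hdisc, hmin⟩
    · left
      refine ⟨k, hk, k', hk', hlt, ?_⟩
      rw [delayBetween_eq ρ' (le_of_lt hlt), hat1 k, hat1 k', hat2 k, hat2 k',
        if_neg (show ¬ (k ∈ {k | k ∈ ks}) from hmema k hk),
        if_neg (show ¬ (k' ∈ {k | k ∈ ks}) from hmemb k' hk')] at hz
      rw [delayBetween_eq ρ (le_of_lt hlt)]
      linarith
    · right
      have hdisc2 : Discards ρ ℓ x := by rw [← hdc_eq]; exact hdisc
      have hmin2 : ∀ m, k' < m → m < ℓ → ¬ Discards ρ m x :=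
        fun m h1 h2 hd => hmin m h1 h2 (by rw [hdc_eq]; exact hd)
      obtain ⟨ℓ₀, g1, g2, g3, g4⟩ := fate_disc0_D hbb' hγb hlast hu
      have g2' : Discards ρ ℓ₀ x := by rw [← hdc_eq]; exact g2
      have g3' : ∀ m, k' < m → m < ℓ₀ → ¬ Discards ρ m x :=
        fun m h1 h2 hd => g3 m h1 h2 (by rw [hdc_eq]; exact hd)
      have hll : ℓ₀ = ℓ := first_discard_unique g1 g2' g3' hlt hdisc2 hmin2
      subst hll
      have hnos' : ∀ b, ¬ Triggers ρ' k' b := fun b => hbb'.2.2.2.1 k' b hlast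
      have hnos : ∀ b, ¬ Triggers ρ k' b := fun b => hbb.2.2.2.1 k' b hlast
      have hu2 : ρ.upds k' = some (x, c) := hu
      have hv' := (discard_value ρ' hu hnos' g1 g3).2
      rw [hv'] at g4
      rw [hat1 k', hat1 ℓ₀, hat2 k', hat2 ℓ₀,
        if_neg (show ¬ (k' ∈ {k | k ∈ ks}) from hmemb k' (mem_of_getLast?' _ _ hlast)),
        if_neg (show ¬ (ℓ₀ ∈ {k | k ∈ ks}) from hmema ℓ₀ hℓ)] at g4
      have hv := (discard_value ρ hu2 hnos g1 g3').2
      have hDρ : DiscardedAtZeroAfter ρ k' x := ⟨ℓ₀, g1, g2', g3', by rw [hv]; linarith⟩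
      have hfb : fateOf ρ lb = Fate.disc0 :=
        ((fateOf_spec ρ lb k' hlast).2 x c hu2).1 hDρ
      exact ⟨hfb, k', x, c, hlast, hu2, ℓ₀, hℓ, g1, hdisc2, hmin2⟩
  have hsub : RacePairs ρ' ⊆ RacePairs ρ := by
    rintro ⟨l1, l2⟩ hq
    obtain ⟨h1k, h2k⟩ := havoid (l1, l2) hq
    obtain ⟨γ₁', γ₂', hb1', hb2', hne12, hrc⟩ := hq
    have hba : IsBlock ρ l1 (fateOf ρ l1) :=
      isBlock_transfer (ρ := ρ') (ρ' := ρ) rfl rfl rfl hb1'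
    have hbb : IsBlock ρ l2 (fateOf ρ l2) :=
      isBlock_transfer (ρ := ρ') (ρ' := ρ) rfl rfl rfl hb2'
    refine ⟨fateOf ρ l1, fateOf ρ l2, hba, hbb, hne12, ?_⟩
    rcases hrc with h | h
    · exact Or.inl (htransfer l1 l2 γ₁' γ₂' h1k h2k hb1' hb2' h)
    · exact Or.inr (htransfer l2 l1 γ₂' γ₁' h2k h1k hb2' hb1' h)
  exact ⟨ρ', ⟨ks, γ, ε, ne_of_gt hεpos, hks, ⟨rfl, rfl, rfl, fun j => rfl⟩, hpad', hO6⟩,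
    hpad', hsub, havoid⟩


end Aux7

section Aux8

variable {X I Q : Type} [DecidableEq X] {A : AT X I Q} {n : ℕ}

lemma untime_wiggle {ρ ρ' : TimedRun A n} (h : WiggleStep ρ ρ') : untime ρ' = untime ρ := by
  obtain ⟨ks, γ, ε, -, -, ⟨hst, hac, -, -⟩, -, -⟩ := h
  unfold untime
  rw [hst, hac]

lemma untime_wiggle_rtg {ρ ρ' : TimedRun A n} (h : Relation.ReflTransGen WiggleStep ρ ρ') :
    untime ρ' = untime ρ := by
  induction h with
  | refl => rfl
  | tail h1 h2 ih => rw [untime_wiggle h2, ih]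

lemma wiggle_to_racefree (hcyc : ∀ ρ : TimedRun A n, Padded ρ → ¬ HasCycle ρ) :
    ∀ (N : ℕ) (ρ : TimedRun A n), Padded ρ → (RacePairs ρ).ncard ≤ N →
      ∃ ρ' : TimedRun A n,
        Relation.ReflTransGen WiggleStep ρ ρ' ∧ Padded ρ' ∧ ¬ HasRace ρ' := by
  intro N
  induction N with
  | zero =>
    intro ρ hpad hcard
    refine ⟨ρ, Relation.ReflTransGen.refl, hpad, ?_⟩
    intro hr
    have h0 : 0 < (RacePairs ρ).ncard :=
      (Set.ncard_pos (racePairs_finite ρ)).mpr ((hasRace_iff ρ).mp hr)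
    omega
  | succ N ih =>
    intro ρ hpad hcard
    by_cases hr : HasRace ρ
    · obtain ⟨B, hB, hsink⟩ := exists_racing_sink ρ (hcyc ρ hpad) hr
      obtain ⟨ρ', hstep, hpad', hsub, havoid⟩ := wiggle_sink_step ρ hpad B hB hsink
      obtain ⟨B', hbB', hneB', hraceB'⟩ := hB.2
      have hmem : (B.1, B'.1) ∈ RacePairs ρ :=
        ⟨B.2, B'.2, hB.1, hbB', Ne.symm hneB', hraceB'⟩
      have hnotmem : (B.1, B'.1) ∉ RacePairs ρ' := fun h => (havoid _ h).1 rfl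
      have hltc : (RacePairs ρ').ncard < (RacePairs ρ).ncard := by
        apply Set.ncard_lt_ncard
        · rw [Set.ssubset_def]
          exact ⟨hsub, fun hsup => hnotmem (hsup hmem)⟩
        · exact racePairs_finite ρ
      obtain ⟨ρ'', hrtg, hpad'', hnr⟩ := ih ρ' hpad' (by omega)
      exact ⟨ρ'', Relation.ReflTransGen.head hstep hrtg, hpad'', hnr⟩
    · exact ⟨ρ, Relation.ReflTransGen.refl, hpad, hr⟩

end Aux8

/-- Acyclicity of all padded block graphs implies every padded racing run is wigglable. -/
lemma acyclic_wigglable {X I Q : Type} [DecidableEq X] {A : AT X I Q}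
    (hcyc : ∀ (m : ℕ) (σ : TimedRun A m), Padded σ → ¬ HasCycle σ) :
    ∀ (m : ℕ) (ρ : TimedRun A m), Padded ρ → HasRace ρ → Wigglable ρ := by
  intro m ρ hpad _
  obtain ⟨ρ', hrtg, hpad', hnr⟩ :=
    wiggle_to_racefree (hcyc m) (RacePairs ρ).ncard ρ hpad le_rfl
  exact ⟨ρ', hrtg, hpad', hnr, untime_wiggle_rtg hrtg⟩

section Aux9

variable {X I Q : Type} [DecidableEq X] {A : AT X I Q} {n : ℕ}

lemma hasRace_of_hasCycle {ρ : TimedRun A n} (h : HasCycle ρ) : HasRace ρ := by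
  obtain ⟨m, f, hm, hblocks, hlast, hedges⟩ := h
  by_cases hne : ∃ j : Fin m, f j.castSucc ≠ f j.succ
  · obtain ⟨j, hj⟩ := hne
    exact ⟨f j.castSucc, f j.succ, hblocks _, hblocks _, hj, Or.inl (hedges j)⟩
  · push_neg at hne
    exfalso
    have hedge := hedges ⟨0, hm⟩
    rw [hne ⟨0, hm⟩] at hedge
    exact prec_irrefl (hblocks (⟨0, hm⟩ : Fin m).succ) hedge

lemma untime_fields {ρ σ : TimedRun A n} (h : untime σ = untime ρ) :
    σ.states = ρ.states ∧ σ.acts = ρ.acts ∧ σ.upds = ρ.upds := by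
  unfold untime at h
  have h1 : List.ofFn (fun k : Fin n => (σ.states k.castSucc, σ.acts k))
      = List.ofFn (fun k : Fin n => (ρ.states k.castSucc, ρ.acts k)) :=
    congrArg Prod.fst h
  have h2 : σ.states (Fin.last n) = ρ.states (Fin.last n) := congrArg Prod.snd h
  have h3 := List.ofFn_inj.mp h1
  have hsts : ∀ k : Fin n,
      σ.states k.castSucc = ρ.states k.castSucc ∧ σ.acts k = ρ.acts k := by
    intro k
    have := congrFun h3 k
    exact ⟨congrArg Prod.fst this, congrArg Prod.snd this⟩
  have hstates : σ.states = ρ.states := by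
    funext j
    by_cases hj : (j : ℕ) < n
    · have hjc : j = (⟨(j : ℕ), hj⟩ : Fin n).castSucc := Fin.ext rfl
      rw [hjc]
      exact (hsts _).1
    · have hjl : j = Fin.last n :=
        Fin.ext (by have := j.isLt; simp only [Fin.val_last]; omega)
      rw [hjl]
      exact h2
  have hacts : σ.acts = ρ.acts := funext fun k => (hsts k).2
  refine ⟨hstates, hacts, ?_⟩
  funext k
  have ht1 := σ.trans k
  have ht2 := ρ.trans k
  rw [hstates, hacts] at ht1
  rw [ht1] at ht2
  injection ht2 with h'
  exact congrArg Prod.snd h'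

lemma atime_shift_const {ρ σ : TimedRun A n}
    (hst : σ.states = ρ.states) (hac : σ.acts = ρ.acts) (hup : σ.upds = ρ.upds)
    {ks : List (Fin n)} (hch : List.Chain' (Triggers ρ) ks) :
    ∀ a ∈ ks, ∀ b ∈ ks, atime σ a - atime ρ a = atime σ b - atime ρ b := by
  have htrc := triggers_congr hst hac hup
  set R₀ : Fin n → Fin n → Prop :=
    fun u v => atime σ u - atime ρ u = atime σ v - atime ρ v with hR
  letI : IsTrans (Fin n) R₀ := ⟨fun u v w h1 h2 => h1.trans h2⟩
  have hch' : List.Chain' R₀ ks := by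
    apply List.IsChain.imp ?_ hch
    intro u v huv
    obtain ⟨x, c, hu, -⟩ := huv.2
    have h1 := trig_atime ρ huv hu
    have huvσ : Triggers σ u v := by rw [htrc]; exact huv
    have huσ : σ.upds u = some (x, c) := by rw [hup]; exact hu
    have h2 := trig_atime σ huvσ huσ
    show atime σ u - atime ρ u = atime σ v - atime ρ v
    linarith
  have hp := List.pairwise_iff_get.mp (List.isChain_iff_pairwise.mp hch')
  intro a ha b hb
  obtain ⟨ia, hia⟩ := List.mem_iff_get.mp ha
  obtain ⟨ib, hib⟩ := List.mem_iff_get.mp hb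
  rcases lt_trichotomy ia ib with h | h | h
  · have := hp ia ib h
    rw [hia, hib] at this
    exact this
  · rw [h, hib] at hia
    rw [hia]
  · have := hp ib ia h
    rw [hia, hib] at this
    exact this.symm

lemma edge_shift_lt {ρ σ : TimedRun A n}
    (hst : σ.states = ρ.states) (hac : σ.acts = ρ.acts) (hup : σ.upds = ρ.upds)
    (hnr : ¬ HasRace σ) {Bp Bq : List (Fin n) × Fate}
    (hbp : IsBlock ρ Bp.1 Bp.2) (hbq : IsBlock ρ Bq.1 Bq.2)
    (hne : Bp ≠ Bq) (hedge : Prec ρ Bp Bq) :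
    ∃ a ∈ Bp.1, ∃ b ∈ Bq.1,
      atime σ a - atime ρ a < atime σ b - atime ρ b := by
  have hdc := discards_congr hst hac hup
  have htrc := triggers_congr hst hac hup
  have hbp' : IsBlock σ Bp.1 (fateOf σ Bp.1) := isBlock_transfer hst hac hup hbp
  have hbq' : IsBlock σ Bq.1 (fateOf σ Bq.1) := isBlock_transfer hst hac hup hbq
  have hlne : Bp.1 ≠ Bq.1 := blocks_ne_lists hbp hbq hne
  have hnorace : ¬ BlocksRace σ (Bp.1, fateOf σ Bp.1) (Bq.1, fateOf σ Bq.1) := by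
    intro hbr
    exact hnr ⟨(Bp.1, fateOf σ Bp.1), (Bq.1, fateOf σ Bq.1), hbp', hbq',
      fun h => hlne (Prod.ext_iff.mp h).1, hbr⟩
  rcases hedge with ⟨k, hk, k', hk', hlt, hz⟩ |
    ⟨hγq, k', x, c, hlast, hu, ℓ, hℓ, hlt, hdisc, hmin⟩
  · refine ⟨k, hk, k', hk', ?_⟩
    rw [delayBetween_eq ρ (le_of_lt hlt)] at hz
    have hσne : delayBetween σ k k' ≠ 0 := by
      intro h0
      exact hnorace (Or.inl (Or.inl ⟨k, hk, k', hk', hlt, h0⟩))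
    have hσnn := delayBetween_nonneg σ k k'
    rw [delayBetween_eq σ (le_of_lt hlt)] at hσne hσnn
    have hσpos : 0 < atime σ k' - atime σ k := lt_of_le_of_ne hσnn (Ne.symm hσne)
    linarith
  · refine ⟨ℓ, hℓ, k', mem_of_getLast?' _ _ hlast, ?_⟩
    have hnos : ∀ b, ¬ Triggers ρ k' b := fun b => hbq.2.2.2.1 k' b hlast
    have hnosσ : ∀ b, ¬ Triggers σ k' b := fun b h => hnos b (by rw [← htrc]; exact h)
    have huσ : σ.upds k' = some (x, c) := by rw [hup]; exact hu
    obtain ⟨ℓ₀, g1, g2, g3, g4⟩ := fate_disc0_D hbq hγq hlast hu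
    have hll : ℓ₀ = ℓ := first_discard_unique g1 g2 g3 hlt hdisc hmin
    subst hll
    have hv := (discard_value ρ hu hnos g1 g3).2
    rw [hv] at g4
    have g3σ : ∀ m, k' < m → m < ℓ₀ → ¬ Discards σ m x :=
      fun m h1 h2 hd => g3 m h1 h2 (by rw [← hdc]; exact hd)
    have g2σ : Discards σ ℓ₀ x := by rw [hdc]; exact g2
    have hvσ := (discard_value σ huσ hnosσ g1 g3σ).2
    have hnnσ := discard_value_nonneg σ huσ hnosσ g1 g3σ
    have hneσ : ((c : ℕ) : ℝ) + atime σ k' - atime σ ℓ₀ ≠ 0 := by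
      intro h0
      have hDσ : DiscardedAtZeroAfter σ k' x := ⟨ℓ₀, g1, g2σ, g3σ, by rw [hvσ]; linarith⟩
      have hfσ : fateOf σ Bq.1 = Fate.disc0 :=
        ((fateOf_spec σ Bq.1 k' hlast).2 x c huσ).1 hDσ
      exact hnorace (Or.inl (Or.inr ⟨hfσ, k', x, c, hlast, huσ, ℓ₀, hℓ, g1, g2σ, g3σ⟩))
    have hposσ : 0 < ((c : ℕ) : ℝ) + atime σ k' - atime σ ℓ₀ :=
      lt_of_le_of_ne hnnσ (Ne.symm hneσ)
    linarith

end Aux9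

/-- A race-avoiding AT has acyclic block graphs on all padded runs. -/
lemma raceAvoiding_acyclic {X I Q : Type} [DecidableEq X] {A : AT X I Q}
    (hR : RaceAvoiding A) :
    ∀ (m : ℕ) (ρ : TimedRun A m), Padded ρ → ¬ HasCycle ρ := by
  intro m ρ hpad hcyc
  have hr : HasRace ρ := hasRace_of_hasCycle hcyc
  obtain ⟨n', ρ'', hpad'', hnr, huntime⟩ := hR m ρ hpad hr
  have hlen : n' = m := by
    have hl := congrArg (fun p => p.1.length) huntime
    simpa [untime] using hl
  subst hlen
  obtain ⟨hst, hac, hup⟩ := untime_fields huntime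
  obtain ⟨mm, f, hm, hblocks, hlastf, hedges⟩ := hcyc
  have hmono : ∀ j : Fin mm, ∀ a ∈ (f j.castSucc).1, ∀ b ∈ (f j.succ).1,
      atime ρ'' a - atime ρ a < atime ρ'' b - atime ρ b := by
    intro j a ha b hb
    have hnej : f j.castSucc ≠ f j.succ := by
      intro h
      have hedge := hedges j
      rw [h] at hedge
      exact prec_irrefl (hblocks j.succ) hedge
    obtain ⟨a', ha', b', hb', hlt'⟩ :=
      edge_shift_lt hst hac hup hnr (hblocks j.castSucc) (hblocks j.succ) hnej (hedges j)
    have h1 := atime_shift_const hst hac hup (hblocks j.castSucc).2.1 a ha a' ha'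
    have h2 := atime_shift_const hst hac hup (hblocks j.succ).2.1 b hb b' hb'
    linarith
  have hhead : ∀ p : Fin (mm+1), ∃ a, a ∈ (f p).1 := by
    intro p
    cases hfp : (f p).1 with
    | nil => exact absurd hfp (hblocks p).1
    | cons a t => exact ⟨a, List.mem_cons_self⟩
  choose g hg using hhead
  have hstep : ∀ j : Fin mm,
      atime ρ'' (g j.castSucc) - atime ρ (g j.castSucc)
        < atime ρ'' (g j.succ) - atime ρ (g j.succ) :=
    fun j => hmono j _ (hg _) _ (hg _)
  have hlast_eq : atime ρ'' (g (Fin.last mm)) - atime ρ (g (Fin.last mm))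
      = atime ρ'' (g 0) - atime ρ (g 0) := by
    have hmem : g (Fin.last mm) ∈ (f 0).1 := by rw [← hlastf]; exact hg _
    exact atime_shift_const hst hac hup (hblocks 0).2.1 _ hmem _ (hg 0)
  have hinc : ∀ p : Fin (mm+1), 0 < (p : ℕ) →
      atime ρ'' (g 0) - atime ρ (g 0) < atime ρ'' (g p) - atime ρ (g p) := by
    intro p
    induction p using Fin.induction with
    | zero => intro h; simp at h
    | succ i ih =>
      intro _
      by_cases hi : 0 < ((i.castSucc : Fin (mm+1)) : ℕ)
      · exact lt_trans (ih hi) (hstep i)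
      · have hi0 : (i.castSucc : Fin (mm+1)) = 0 := by
          apply Fin.ext
          simp only [Fin.coe_castSucc, Fin.val_zero] at hi ⊢
          omega
        have := hstep i
        rw [hi0] at this
        exact this
  have hfin := hinc (Fin.last mm) (by simpa using hm)
  rw [hlast_eq] at hfin
  exact lt_irrefl _ hfin


end AwT

/-! ### Linear-bounded Turing machines -/

/-- A (nondeterministic) linear-bounded Turing machine with alphabet `σ` and states `Q`.
A transition `(q, α, α', D, q')` reads `α`, writes `α'` and moves left (`D = false`) or
right (`D = true`). -/
structure LBTM (σ Q : Type) where
  q0 : Q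
  qF : Q
  T : Finset (Q × σ × σ × Bool × Q)

/-- One step of an LBTM on a tape of length `n`; configurations are (state, tape, head). -/
def LBTMStep {σ Q : Type} (M : LBTM σ Q) {n : ℕ}
    (c c' : Q × (Fin n → σ) × Fin n) : Prop :=
  ∃ α' : σ, ∃ D : Bool, (c.1, c.2.1 c.2.2, α', D, c'.1) ∈ M.T ∧
    c'.2.1 = Function.update c.2.1 c.2.2 α' ∧
    ((D = true ∧ (c'.2.2 : ℕ) = (c.2.2 : ℕ) + 1) ∨
     (D = false ∧ (c.2.2 : ℕ) = (c'.2.2 : ℕ) + 1))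

/-- `M` accepts the word `w`. -/
def LBTMAccepts {σ Q : Type} (M : LBTM σ Q) {n : ℕ} (hn : 0 < n) (w : Fin n → σ) : Prop :=
  ∃ c : Q × (Fin n → σ) × Fin n,
    Relation.ReflTransGen (LBTMStep M) (M.q0, w, ⟨0, hn⟩) c ∧ c.1 = M.qF


/-- An AT `A` is race-avoiding iff every padded timed run of `A` with races
can be wiggled, and this holds iff the block graph of every padded timed run of `A` is
acyclic. -/
theorem race_avoiding_characterization {X I Q : Type} [DecidableEq X] [Fintype X] [Fintype I]
    [Fintype Q] (A : AwT.AT X I Q) :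
    (AwT.RaceAvoiding A ↔
      ∀ (n : ℕ) (ρ : AwT.TimedRun A n), AwT.Padded ρ → AwT.HasRace ρ → AwT.Wigglable ρ) ∧
    (AwT.RaceAvoiding A ↔
      ∀ (n : ℕ) (ρ : AwT.TimedRun A n), AwT.Padded ρ → ¬ AwT.HasCycle ρ) := by
  have hWR : (∀ (n : ℕ) (ρ : AwT.TimedRun A n),
      AwT.Padded ρ → AwT.HasRace ρ → AwT.Wigglable ρ) → AwT.RaceAvoiding A := by
    intro hW n ρ hpad hr
    obtain ⟨ρ', -, hpad', hnr, hu⟩ := hW n ρ hpad hr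
    exact ⟨n, ρ', hpad', hnr, hu⟩
  exact ⟨⟨fun hR => AwT.acyclic_wigglable (AwT.raceAvoiding_acyclic hR), hWR⟩,
    ⟨AwT.raceAvoiding_acyclic, fun hC => hWR (AwT.acyclic_wigglable hC)⟩⟩
end

section
/- Let A be an automaton with timers such that every state has at most one active timer, i.e., |χ(q)| ≤ 1 for all states q. Then A is race-avoiding. -/
set_option maxHeartbeats 1000000

/-! ### Auxiliary constructions for Statement 11 -/

namespace AwT

variable {X I Q : Type} [DecidableEq X] {A : AT X I Q} {n : ℕ}

open Classical in
/-- Fresh delay at position `p`, given the current valuation `v`. -/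
noncomputable def dly (ρ : TimedRun A n) (p : ℕ) (v : X → ℝ) : ℝ :=
  if hp : p < n + 1 then
    if h2 : (A.χ (ρ.states ⟨p, hp⟩)).Nonempty then
      if ∃ hq : p < n, ρ.acts ⟨p, hq⟩ = Act.timeout h2.choose then v h2.choose
      else v h2.choose / 2
    else 1
  else 1

/-- Fresh valuations. -/
noncomputable def vls (ρ : TimedRun A n) : ℕ → X → ℝ
  | 0 => fun _ => 0
  | p + 1 => fun y =>
      if hp : p < n then
        (ρ.upds ⟨p, hp⟩).elim (vls ρ p y - dly ρ p (vls ρ p))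
          (fun pr => if y = pr.1 then ((pr.2 : ℕ) : ℝ) else vls ρ p y - dly ρ p (vls ρ p))
      else 0

lemma vls_succ (ρ : TimedRun A n) (p : ℕ) (hpn : p < n) (y : X) :
    vls ρ (p+1) y = (ρ.upds ⟨p, hpn⟩).elim (vls ρ p y - dly ρ p (vls ρ p))
      (fun pr => if y = pr.1 then ((pr.2 : ℕ) : ℝ) else vls ρ p y - dly ρ p (vls ρ p)) := by
  simp only [vls, dif_pos hpn]

lemma chi_uniq (hcard : ∀ q, (A.χ q).card ≤ 1) {q : Q} {x y : X}
    (hx : x ∈ A.χ q) (hy : y ∈ A.χ q) : x = y :=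
  Finset.card_le_one.mp (hcard q) x hx y hy

lemma dly_eq_half (hcard : ∀ q, (A.χ q).card ≤ 1) (ρ : TimedRun A n) {p : ℕ}
    (hp : p < n + 1) {x : X} (hx : x ∈ A.χ (ρ.states ⟨p, hp⟩))
    (hna : ∀ hq : p < n, ρ.acts ⟨p, hq⟩ ≠ Act.timeout x) (v : X → ℝ) :
    dly ρ p v = v x / 2 := by
  have h2 : (A.χ (ρ.states ⟨p, hp⟩)).Nonempty := ⟨x, hx⟩
  have hcx : h2.choose = x := chi_uniq hcard h2.choose_spec hx
  rw [dly, dif_pos hp, dif_pos h2, hcx, if_neg (fun hh => hna hh.choose hh.choose_spec)]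

lemma dly_eq_full (hcard : ∀ q, (A.χ q).card ≤ 1) (ρ : TimedRun A n) {p : ℕ}
    (hq : p < n) {x : X} (hx : x ∈ A.χ (ρ.states ⟨p, Nat.lt_succ_of_lt hq⟩))
    (ha : ρ.acts ⟨p, hq⟩ = Act.timeout x) (v : X → ℝ) :
    dly ρ p v = v x := by
  have hp : p < n + 1 := Nat.lt_succ_of_lt hq
  have h2 : (A.χ (ρ.states ⟨p, hp⟩)).Nonempty := ⟨x, hx⟩
  have hcx : h2.choose = x := chi_uniq hcard h2.choose_spec hx
  rw [dly, dif_pos hp, dif_pos h2, hcx, if_pos ⟨hq, ha⟩]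

lemma vls_pos (hcard : ∀ q, (A.χ q).card ≤ 1) (ρ : TimedRun A n) :
    ∀ p (hp : p < n + 1), ∀ x ∈ A.χ (ρ.states ⟨p, hp⟩), 0 < vls ρ p x := by
  intro p
  induction p with
  | zero =>
    intro hp x hx
    have e : (⟨0, hp⟩ : Fin (n+1)) = 0 := by apply Fin.ext; simp
    rw [e, ρ.init_state, A.init_active] at hx
    simp at hx
  | succ p ih =>
    intro hp x hx
    have hpn : p < n := Nat.lt_of_succ_lt_succ hp
    set k : Fin n := ⟨p, hpn⟩ with hk
    have htr := ρ.trans k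
    have hx' : x ∈ A.χ (ρ.states k.succ) := hx
    rcases hu : ρ.upds k with _ | ⟨z, c⟩
    · rw [hu] at htr
      have hxc : x ∈ A.χ (ρ.states k.castSucc) := A.noupdate_sub _ _ _ htr hx'
      have hna : ∀ hq : p < n, ρ.acts ⟨p, hq⟩ ≠ Act.timeout x := by
        intro hq ha
        exact A.noupdate_timeout _ _ _ (ha ▸ htr) hx'
      have hvp := ih (Nat.lt_succ_of_lt hpn) x hxc
      rw [vls_succ ρ p hpn x, hu]
      simp only [Option.elim]
      rw [dly_eq_half hcard ρ (Nat.lt_succ_of_lt hpn) hxc hna]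
      linarith
    · rw [hu] at htr
      by_cases hxz : x = z
      · rw [vls_succ ρ p hpn x, hu]
        simp only [Option.elim, if_pos hxz]
        exact_mod_cast c.property
      · have hx'' : x ∈ A.χ (ρ.states k.succ) \ {z} :=
          Finset.mem_sdiff.mpr ⟨hx', by simp [hxz]⟩
        have hxc : x ∈ A.χ (ρ.states k.castSucc) := A.update_sub _ _ _ _ _ htr hx''
        have hna : ∀ hq : p < n, ρ.acts ⟨p, hq⟩ ≠ Act.timeout x := by
          intro hq ha
          exact hxz ((A.timeout_self _ _ _ _ _ (ha ▸ htr)).symm)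
        have hvp := ih (Nat.lt_succ_of_lt hpn) x hxc
        rw [vls_succ ρ p hpn x, hu]
        simp only [Option.elim, if_neg hxz]
        rw [dly_eq_half hcard ρ (Nat.lt_succ_of_lt hpn) hxc hna]
        linarith

lemma dly_pos (hcard : ∀ q, (A.χ q).card ≤ 1) (ρ : TimedRun A n) (p : ℕ) :
    0 < dly ρ p (vls ρ p) := by
  rw [dly]
  split_ifs with hp h2 h3
  · exact vls_pos hcard ρ p hp _ h2.choose_spec
  · have := vls_pos hcard ρ p hp _ h2.choose_spec
    linarith
  · exact one_pos
  · exact one_pos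

lemma half_ne (hcard : ∀ q, (A.χ q).card ≤ 1) (ρ : TimedRun A n) {p : ℕ}
    (hp : p < n + 1) {x : X} (hx : x ∈ A.χ (ρ.states ⟨p, hp⟩))
    (hna : ∀ hq : p < n, ρ.acts ⟨p, hq⟩ ≠ Act.timeout x) :
    vls ρ p x - dly ρ p (vls ρ p) ≠ 0 := by
  rw [dly_eq_half hcard ρ hp hx hna]
  have := vls_pos hcard ρ p hp x hx
  intro hcon; linarith

/-- The repaired run: same untimed behaviour, fresh delays. -/
noncomputable def fixRun (hcard : ∀ q, (A.χ q).card ≤ 1) (ρ : TimedRun A n) :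
    TimedRun A n where
  states := ρ.states
  vals := fun k => vls ρ k.1
  delays := fun k => dly ρ k.1 (vls ρ k.1)
  acts := ρ.acts
  upds := ρ.upds
  init_state := ρ.init_state
  init_val := fun _ => rfl
  delays_nonneg := fun k => (dly_pos hcard ρ k.1).le
  delays_le := by
    intro k x hx
    show dly ρ k.1 (vls ρ k.1) ≤ vls ρ k.1 x
    by_cases hto : ∃ hq : k.1 < n, ρ.acts ⟨k.1, hq⟩ = Act.timeout x
    · rcases hto with ⟨hq, ha⟩
      rw [show (dly ρ k.1 (vls ρ k.1)) = vls ρ k.1 x from dly_eq_full hcard ρ hq hx ha _]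
    · have hna : ∀ hq : k.1 < n, ρ.acts ⟨k.1, hq⟩ ≠ Act.timeout x :=
        fun hq ha => hto ⟨hq, ha⟩
      have h1 : dly ρ k.1 (vls ρ k.1) = vls ρ k.1 x / 2 :=
        dly_eq_half hcard ρ k.isLt hx hna _
      have h2 := vls_pos hcard ρ k.1 k.isLt x hx
      rw [h1]; linarith
  trans := ρ.trans
  timeout_zero := by
    intro k x ha
    have hdef : (A.δ (ρ.states k.castSucc) (ρ.acts k)).isSome := by
      rw [ρ.trans k]; rfl
    rcases (A.defined_iff _ _).mp hdef with ⟨i, hi⟩ | ⟨x', hx', hx'2⟩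
    · rw [ha] at hi; exact absurd hi (by simp)
    · rw [ha] at hx'2
      have hxx : x' = x := by
        cases hx'2; rfl
      subst hxx
      have := dly_eq_full hcard ρ k.isLt hx' ha (vls ρ k.1)
      show vls ρ k.1 x' - dly ρ k.1 (vls ρ k.1) = 0
      rw [this]; ring
  val_step := by
    intro k y
    show vls ρ (k.1 + 1) y = _
    rw [vls_succ ρ k.1 k.isLt y]
    rfl

lemma fixRun_padded (hcard : ∀ q, (A.χ q).card ≤ 1) (ρ : TimedRun A n) :
    Padded (fixRun hcard ρ) := by
  refine ⟨dly_pos hcard ρ (0 : Fin (n+1)).1, dly_pos hcard ρ (Fin.last n).1, ?_⟩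
  intro x hx
  exact half_ne hcard ρ (Fin.last n).isLt hx (fun hq _ => absurd hq (by simp))

lemma fixRun_no_race (hcard : ∀ q, (A.χ q).card ≤ 1) (ρ : TimedRun A n) :
    ¬ HasRace (fixRun hcard ρ) := by
  rintro ⟨B, B', hB, hB', hne, hrace⟩
  have key : ∀ (C C' : List (Fin n) × Fate), IsBlock (fixRun hcard ρ) C'.1 C'.2 →
      ¬ Prec (fixRun hcard ρ) C C' := by
    rintro C C' hBl (⟨k, hk, k', hk', hlt, hsum⟩ | ⟨hγ, k', x, c, hlast, hupd, hrest⟩)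
    · have hpos : 0 < delayBetween (fixRun hcard ρ) k k' := by
        apply Finset.sum_pos
        · intro ℓ _
          exact dly_pos hcard ρ _
        · exact ⟨k', Finset.mem_Ioc.mpr ⟨hlt, le_refl k'⟩⟩
      linarith
    · have hfate := (hBl.2.2.2.2 k' hlast).2 x c hupd
      have hnd : ¬ DiscardedAtZeroAfter (fixRun hcard ρ) k' x := by
        rintro ⟨ℓ, -, ⟨hxχ, hnto, -⟩, -, hzero⟩
        exact half_ne hcard ρ (Nat.lt_succ_of_lt ℓ.isLt) hxχ (fun hq hav => hnto hav) hzero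
      have hcr := hfate.2 hnd
      rw [hγ] at hcr
      exact Fate.noConfusion hcr
  cases hrace with
  | inl hpr => exact key _ _ hB' hpr
  | inr hpr => exact key _ _ hB hpr

end AwT


/-- If every state of an AT `A` has at most one active timer, then `A` is
race-avoiding. -/
theorem single_active_timer_race_avoiding {X I Q : Type} [DecidableEq X] [Fintype X]
    [Fintype I] [Fintype Q] (A : AwT.AT X I Q) (h : ∀ q, (A.χ q).card ≤ 1) :
    AwT.RaceAvoiding A := by
  intro n ρ _hpad _hrace
  exact ⟨n, AwT.fixRun h ρ, AwT.fixRun_padded h ρ, AwT.fixRun_no_race h ρ, rfl⟩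
end
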